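/- arXiv:0908.2332 — 8 statements merged into one kernel-verified Lean document; each statement's English description precedes it below -/
import Mathlib

section
/- Every continuous linear endomorphism φ of ℂ[[x]] (with the topology of coefficientwise convergence) is of the form Φ_M for a unique row-finite matrix M : ℕ×ℕ → ℂ. -/
/-- A row-finite matrix: each row is finitely supported. -/
def RowFinite (M : ℕ → ℕ → ℂ) : Prop :=
  ∀ n, (Function.support (M n)).Finite

/-- The operator `Φ_M` on `ℂ[[x]]` associated with a matrix `M`:
the `n`-th coefficient of `Φ_M(f)` is `Σ_k M[n,k]·a_k` where `a_k` are the
coefficients of `f`. -/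
noncomputable def Phi (M : ℕ → ℕ → ℂ) (f : PowerSeries ℂ) : PowerSeries ℂ :=
  PowerSeries.mk fun n => ∑ᶠ k, M n k * PowerSeries.coeff (R := ℂ) k f

/-- The Fréchet topology of simple (coefficientwise) convergence on `ℂ[[x]]`:
the topology induced by the coefficient maps into the product `ℕ → ℂ`. -/
noncomputable def coeffTopology : TopologicalSpace (PowerSeries ℂ) :=
  TopologicalSpace.induced (fun f n => PowerSeries.coeff (R := ℂ) n f)
    (Pi.topologicalSpace (ι := ℕ) (Y := fun _ => ℂ))

/-- Each "row functional" `f ↦ coeff n (φ f)` of a continuous linear map only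
depends on finitely many coefficients: it kills every series vanishing on a
suitable finite set of coefficients. -/
lemma key_aux (φ : PowerSeries ℂ →ₗ[ℂ] PowerSeries ℂ)
    (hφ : @Continuous _ _ coeffTopology coeffTopology φ) (n : ℕ) :
    ∃ I : Finset ℕ, ∀ g : PowerSeries ℂ,
      (∀ i ∈ I, PowerSeries.coeff (R := ℂ) i g = 0) → PowerSeries.coeff (R := ℂ) n (φ g) = 0 := by
  classical
  set e : PowerSeries ℂ → (ℕ → ℂ) := fun f m => PowerSeries.coeff (R := ℂ) m f with he
  have hL : @Continuous _ _ coeffTopology _ (fun f => PowerSeries.coeff (R := ℂ) n (φ f)) := by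
    have h1 : @Continuous _ _ coeffTopology _ e := continuous_induced_dom
    have h2 := @Continuous.comp _ _ _ coeffTopology _ _ _ _ (continuous_apply n) h1
    exact @Continuous.comp _ _ _ coeffTopology coeffTopology _ _ _ h2 hφ
  have ht : Filter.Tendsto (fun f => PowerSeries.coeff (R := ℂ) n (φ f))
      (@nhds _ coeffTopology 0) (nhds 0) := by
    have := @Continuous.tendsto _ _ coeffTopology _ _ hL 0
    simpa using this
  have hball : (fun f => PowerSeries.coeff (R := ℂ) n (φ f)) ⁻¹' Metric.ball 0 1 ∈
      @nhds _ coeffTopology 0 := ht (Metric.ball_mem_nhds 0 one_pos)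
  have hball2 : (fun f => PowerSeries.coeff (R := ℂ) n (φ f)) ⁻¹' Metric.ball 0 1 ∈
      @nhds _ (TopologicalSpace.induced e Pi.topologicalSpace) 0 := hball
  rw [nhds_induced] at hball2
  rcases Filter.mem_comap.mp hball2 with ⟨t, ht', hsub⟩
  have he0 : e 0 = 0 := by funext m; simp [he]
  rw [he0, nhds_pi] at ht'
  rcases Filter.mem_pi.mp ht' with ⟨Is, hIfin, s, hs, hsub2⟩
  refine ⟨hIfin.toFinset, fun g hg => ?_⟩
  by_contra hne
  set c : ℂ := 2 / (PowerSeries.coeff (R := ℂ) n (φ g)) with hc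
  have hmem : e (c • g) ∈ Is.pi s := by
    intro i hi
    have : PowerSeries.coeff (R := ℂ) i g = 0 := hg i (hIfin.mem_toFinset.mpr hi)
    have : e (c • g) i = 0 := by simp [he, this]
    rw [this]
    exact mem_of_mem_nhds (hs i)
  have hin : c • g ∈ (fun f => PowerSeries.coeff (R := ℂ) n (φ f)) ⁻¹' Metric.ball 0 1 :=
    hsub (hsub2 hmem)
  have hval : PowerSeries.coeff (R := ℂ) n (φ (c • g)) = 2 := by
    rw [map_smul, map_smul, smul_eq_mul, hc, div_mul_cancel₀]
    exact hne
  have : ‖(2 : ℂ)‖ < 1 := by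
    have := hin
    simp only [Set.mem_preimage, Metric.mem_ball, dist_zero_right] at this
    rwa [hval] at this
  norm_num at this

/-- Every continuous linear endomorphism of `ℂ[[x]]` (with the topology of
coefficientwise convergence) is `Φ_M` for a unique row-finite matrix `M`. -/
theorem stmt_4 (φ : PowerSeries ℂ →ₗ[ℂ] PowerSeries ℂ)
    (hφ : @Continuous _ _ coeffTopology coeffTopology φ) :
    ∃! M : ℕ → ℕ → ℂ, RowFinite M ∧ ∀ f, φ f = Phi M f := by
  classical
  choose I hI using key_aux φ hφ
  set M : ℕ → ℕ → ℂ := fun n k => PowerSeries.coeff (R := ℂ) n (φ (PowerSeries.monomial (R := ℂ) k 1))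
    with hMdef
  have hMzero : ∀ n k, k ∉ I n → M n k = 0 := by
    intro n k hk
    apply hI n
    intro i hi
    rw [PowerSeries.coeff_monomial, if_neg]
    rintro rfl; exact hk hi
  have hsupp : ∀ n, Function.support (M n) ⊆ (I n : Set ℕ) := by
    intro n k hk
    by_contra h
    exact hk (hMzero n k h)
  have hPhi : ∀ f, φ f = Phi M f := by
    intro f
    ext n
    rw [Phi, PowerSeries.coeff_mk]
    have hfs : ∑ᶠ k, M n k * PowerSeries.coeff (R := ℂ) k f
        = ∑ k ∈ I n, M n k * PowerSeries.coeff (R := ℂ) k f := by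
      apply finsum_eq_finset_sum_of_support_subset
      intro k hk
      apply hsupp n
      intro h
      exact hk (by simp [h])
    rw [hfs]
    set g : PowerSeries ℂ := ∑ k ∈ I n, PowerSeries.coeff (R := ℂ) k f • PowerSeries.monomial (R := ℂ) k 1
      with hg
    have hcoeffg : ∀ i ∈ I n, PowerSeries.coeff (R := ℂ) i (f - g) = 0 := by
      intro i hi
      have : PowerSeries.coeff (R := ℂ) i g = PowerSeries.coeff (R := ℂ) i f := by
        rw [hg, map_sum]
        rw [Finset.sum_eq_single i]
        · simp [PowerSeries.coeff_monomial]
        · intro k hk hki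
          simp [PowerSeries.coeff_monomial, Ne.symm hki]
        · intro h; exact absurd hi h
      rw [map_sub, this, sub_self]
    have h1 : PowerSeries.coeff (R := ℂ) n (φ (f - g)) = 0 := hI n _ hcoeffg
    rw [map_sub, map_sub, sub_eq_zero] at h1
    rw [h1, hg, map_sum, map_sum]
    apply Finset.sum_congr rfl
    intro k _
    rw [map_smul, map_smul, smul_eq_mul, mul_comm]
  refine ⟨M, ⟨fun n => Set.Finite.subset (I n).finite_toSet (hsupp n), hPhi⟩, ?_⟩
  rintro M' ⟨hM'fin, hM'⟩
  funext n k
  have h1 := congrArg (PowerSeries.coeff (R := ℂ) n) (hM' (PowerSeries.monomial (R := ℂ) k 1))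
  rw [Phi, PowerSeries.coeff_mk] at h1
  have h2 : ∑ᶠ j, M' n j * PowerSeries.coeff (R := ℂ) j (PowerSeries.monomial (R := ℂ) k 1)
      = M' n k := by
    rw [finsum_eq_single _ k]
    · simp [PowerSeries.coeff_monomial]
    · intro j hj
      simp [PowerSeries.coeff_monomial, hj]
  rw [h2] at h1
  exact h1.symm
end

section
/- Let e ≥ 0 be a natural number, let S : ℕ×ℕ → ℂ be such that for each n the function k ↦ S(n,k) is finitely supported, and let g, φ ∈ ℂ[[x]]. Then the following two conditions are equivalent. (i) In ℂ[[x,y]]: Σ_{n,k ≥ 0} S(n,k)·(x^n/n!)·y^k = g(x)·exp(y·φ(x)), where exp(y·φ(x)) := Σ_{k≥0} y^k·φ(x)^k/k!. (ii) For every f ∈ ℂ[[x]], the following identity holds in ℂ[[x,λ]]: Σ_{n,k ≥ 0} S(n,k)·(λ^n/n!)·x^{ne+k}·(D^k f)(x) = g(λx^e)·f(x·(1+φ(λx^e))), where D is the formal derivative of power series, g(λx^e) and φ(λx^e) denote substitution of the series λx^e (which has zero constant term) into g and φ, and f(x·(1+φ(λx^e))) denotes substitution of the series x·(1+φ(λx^e))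 (which has zero constant term) into f. (Here for each n the sum over k is finite, and the total sum converges coefficientwise in λ.) -/
open PowerSeries

/-- View a coefficient function as a formal power series in two variables. -/
def mk2 (F : (Fin 2 →₀ ℕ) → ℂ) : MvPowerSeries (Fin 2) ℂ := F

/-- Substitution of a two-variable formal power series `u` (with zero constant term)
into a one-variable formal power series `h` : the coefficient of `h ∘ u` at `d` is
`Σ_j h_j · coeff_d (u^j)`, a finite sum when `u` has zero constant term. -/
noncomputable def subst1 (h : PowerSeries ℂ) (u : MvPowerSeries (Fin 2) ℂ) :
    MvPowerSeries (Fin 2) ℂ :=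
  mk2 fun d => ∑ᶠ j : ℕ, PowerSeries.coeff j h * MvPowerSeries.coeff d (u ^ j)

/-- The two-variable series `exp(y·φ(x)) := Σ_{k≥0} y^k·φ(x)^k/k!` (here the first
variable is `x`, the second is `y`): its coefficient at `x^m y^k` is `coeff_m(φ^k)/k!`. -/
noncomputable def expY (φ : PowerSeries ℂ) : MvPowerSeries (Fin 2) ℂ :=
  mk2 fun d => PowerSeries.coeff (d 0) (φ ^ (d 1)) / (Nat.factorial (d 1) : ℂ)

namespace StirlingAux

open Finset MvPowerSeries

noncomputable def fs (a c : ℕ) : Fin 2 →₀ ℕ := Finsupp.single 0 a + Finsupp.single 1 c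

@[simp] lemma fs_apply0 (a c : ℕ) : fs a c 0 = a := by simp [fs]
@[simp] lemma fs_apply1 (a c : ℕ) : fs a c 1 = c := by simp [fs]

lemma eq_fs (d : Fin 2 →₀ ℕ) : d = fs (d 0) (d 1) := by
  ext i
  fin_cases i
  · simp
  · simpa using (fs_apply1 (d 0) (d 1)).symm

lemma fs_add (a c a' c' : ℕ) : fs a c + fs a' c' = fs (a + a') (c + c') := by
  ext i; fin_cases i <;> simp [fs]

lemma coeff_mk2 (F : (Fin 2 →₀ ℕ) → ℂ) (d : Fin 2 →₀ ℕ) :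
    MvPowerSeries.coeff d (mk2 F) = F d := rfl

lemma sum_antidiagonal_fin2 (d : Fin 2 →₀ ℕ) (f : (Fin 2 →₀ ℕ) × (Fin 2 →₀ ℕ) → ℂ) :
    ∑ p ∈ Finset.HasAntidiagonal.antidiagonal d, f p =
    ∑ a ∈ Finset.HasAntidiagonal.antidiagonal (d 0), ∑ c ∈ Finset.HasAntidiagonal.antidiagonal (d 1),
      f (fs a.1 c.1, fs a.2 c.2) := by
  rw [← Finset.sum_product']
  refine Finset.sum_nbij' (i := fun p => ((p.1 0, p.2 0), (p.1 1, p.2 1)))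
    (j := fun q => (fs q.1.1 q.2.1, fs q.1.2 q.2.2)) ?_ ?_ ?_ ?_ ?_
  · intro p hp
    rw [Finset.HasAntidiagonal.mem_antidiagonal] at hp
    simp only [Finset.mem_product, Finset.HasAntidiagonal.mem_antidiagonal]
    exact ⟨by rw [← Finsupp.add_apply, hp], by rw [← Finsupp.add_apply, hp]⟩
  · intro q hq
    simp only [Finset.mem_product, Finset.HasAntidiagonal.mem_antidiagonal] at hq
    rw [Finset.HasAntidiagonal.mem_antidiagonal, fs_add, hq.1, hq.2, ← eq_fs]
  · intro p hp
    exact Prod.ext (eq_fs p.1).symm (eq_fs p.2).symm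
  · intro q hq
    simp
  · intro p hp
    exact congrArg f (Prod.ext (eq_fs p.1) (eq_fs p.2))

end StirlingAux

namespace StirlingAux

noncomputable abbrev uu (e : ℕ) : MvPowerSeries (Fin 2) ℂ :=
  MvPowerSeries.X 1 * MvPowerSeries.X 0 ^ e

lemma uu_pow (e j : ℕ) : (uu e) ^ j = MvPowerSeries.monomial (fs (e * j) j) 1 := by
  rw [uu, mul_pow, ← pow_mul, MvPowerSeries.X_pow_eq, MvPowerSeries.X_pow_eq,
    MvPowerSeries.monomial_mul_monomial, one_mul, fs]
  rw [add_comm, mul_comm e j]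

lemma coeff_uu_pow (e j : ℕ) (d : Fin 2 →₀ ℕ) :
    MvPowerSeries.coeff d ((uu e) ^ j) = if d = fs (e * j) j then 1 else 0 := by
  classical
  rw [uu_pow, MvPowerSeries.coeff_monomial]

lemma coeff_subst1_uu (e : ℕ) (h : PowerSeries ℂ) (d : Fin 2 →₀ ℕ) :
    MvPowerSeries.coeff d (subst1 h (uu e)) =
      if d 0 = e * d 1 then PowerSeries.coeff (d 1) h else 0 := by
  classical
  rw [subst1, coeff_mk2]
  rw [finsum_eq_single _ (d 1) ?_]
  · rw [coeff_uu_pow]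
    by_cases hd : d 0 = e * d 1
    · rw [if_pos hd, if_pos, mul_one]
      conv_lhs => rw [eq_fs d, hd]
    · rw [if_neg hd, if_neg, mul_zero]
      intro hh
      exact hd (by rw [eq_fs d] at hh ⊢; have := congrArg (fun z => z 0) hh; simpa using this)
  · intro j hj
    rw [coeff_uu_pow, if_neg, mul_zero]
    intro hh
    exact hj (by have := congrArg (fun z => z 1) hh; simpa using this.symm)

lemma subst1_uu_mul (e : ℕ) (h h' : PowerSeries ℂ) :
    subst1 h (uu e) * subst1 h' (uu e) = subst1 (h * h') (uu e) := by
  classical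
  ext d
  rw [MvPowerSeries.coeff_mul, sum_antidiagonal_fin2, coeff_subst1_uu]
  rw [Finset.sum_comm]
  have step1 : ∀ c ∈ Finset.HasAntidiagonal.antidiagonal (d 1),
      (∑ a ∈ Finset.HasAntidiagonal.antidiagonal (d 0),
        MvPowerSeries.coeff (fs a.1 c.1) (subst1 h (uu e)) *
          MvPowerSeries.coeff (fs a.2 c.2) (subst1 h' (uu e))) =
      (if d 0 = e * d 1 then PowerSeries.coeff c.1 h * PowerSeries.coeff c.2 h' else 0) := by
    intro c hc
    rw [Finset.HasAntidiagonal.mem_antidiagonal] at hc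
    have step2 : ∀ a ∈ Finset.HasAntidiagonal.antidiagonal (d 0),
        MvPowerSeries.coeff (fs a.1 c.1) (subst1 h (uu e)) *
          MvPowerSeries.coeff (fs a.2 c.2) (subst1 h' (uu e)) =
        if a = (e * c.1, e * c.2) then PowerSeries.coeff c.1 h * PowerSeries.coeff c.2 h'
          else 0 := by
      intro a ha
      rw [coeff_subst1_uu, coeff_subst1_uu]
      simp only [fs_apply0, fs_apply1]
      by_cases h1 : a.1 = e * c.1 <;> by_cases h2 : a.2 = e * c.2 <;>
        simp [h1, h2, Prod.ext_iff]
    rw [Finset.sum_congr rfl step2, Finset.sum_ite_eq' (Finset.HasAntidiagonal.antidiagonal (d 0))]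
    have : (e * c.1, e * c.2) ∈ Finset.HasAntidiagonal.antidiagonal (d 0) ↔ d 0 = e * d 1 := by
      rw [Finset.HasAntidiagonal.mem_antidiagonal, ← Nat.mul_add, hc]
      omega
    by_cases hm : d 0 = e * d 1
    · rw [if_pos (this.mpr hm), if_pos hm]
    · rw [if_neg (fun hh => hm (this.mp hh)), if_neg hm]
  rw [Finset.sum_congr rfl step1]
  by_cases hm : d 0 = e * d 1
  · simp only [if_pos hm]
    rw [PowerSeries.coeff_mul]
  · simp [hm]

lemma subst1_one_uu (e : ℕ) : subst1 1 (uu e) = 1 := by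
  classical
  ext d
  rw [coeff_subst1_uu, MvPowerSeries.coeff_one]
  by_cases h1 : d 1 = 0
  · by_cases h0 : d 0 = 0
    · have : d = 0 := by
        rw [eq_fs d, h0, h1]; ext i; fin_cases i <;> simp
      simp [h0, h1, this, PowerSeries.coeff_one]
    · have : d ≠ 0 := fun hh => h0 (by rw [hh]; simp)
      simp [h0, h1, this, PowerSeries.coeff_one]
  · have : d ≠ 0 := fun hh => h1 (by rw [hh]; simp)
    simp [h1, this, PowerSeries.coeff_one]

lemma subst1_pow_uu (e j : ℕ) (h : PowerSeries ℂ) :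
    subst1 (h ^ j) (uu e) = (subst1 h (uu e)) ^ j := by
  induction j with
  | zero => simpa using subst1_one_uu e
  | succ j ih => rw [pow_succ, pow_succ, ← ih, subst1_uu_mul]

lemma one_add_subst1 (e : ℕ) (φ : PowerSeries ℂ) :
    1 + subst1 φ (uu e) = subst1 (1 + φ) (uu e) := by
  classical
  ext d
  rw [map_add, coeff_subst1_uu, coeff_subst1_uu, MvPowerSeries.coeff_one, map_add,
    PowerSeries.coeff_one]
  have hdz : d = 0 ↔ (d 0 = 0 ∧ d 1 = 0) := by
    constructor
    · intro hh; rw [hh]; simp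
    · rintro ⟨a, b⟩; rw [eq_fs d, a, b]; ext i; fin_cases i <;> simp
  by_cases hd : d 0 = e * d 1
  · by_cases h1 : d 1 = 0
    · have h0 : d 0 = 0 := by rw [hd, h1, Nat.mul_zero]
      simp [hd, h1, hdz, h0]
    · have : ¬ d = 0 := fun hh => h1 (hdz.mp hh).2
      simp [hd, h1, this]
  · have : ¬ d = 0 := fun hh => hd (by rw [(hdz.mp hh).1, (hdz.mp hh).2, Nat.mul_zero])
    simp [hd, this]

end StirlingAux

namespace StirlingAux

lemma coeff_F (e : ℕ) (φ f : PowerSeries ℂ) (d : Fin 2 →₀ ℕ) :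
    MvPowerSeries.coeff d (subst1 f (MvPowerSeries.X 0 * (1 + subst1 φ (uu e)))) =
      if e * d 1 ≤ d 0 then
        PowerSeries.coeff (d 0 - e * d 1) f *
          PowerSeries.coeff (d 1) ((1 + φ) ^ (d 0 - e * d 1))
      else 0 := by
  classical
  have hv : ∀ j : ℕ, (MvPowerSeries.X (R := ℂ) 0 * (1 + subst1 φ (uu e))) ^ j =
      MvPowerSeries.monomial (Finsupp.single 0 j) 1 * subst1 ((1 + φ) ^ j) (uu e) := by
    intro j
    rw [mul_pow, one_add_subst1, subst1_pow_uu, MvPowerSeries.X_pow_eq]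
  have hcoeff : ∀ j : ℕ,
      MvPowerSeries.coeff d ((MvPowerSeries.X (R := ℂ) 0 * (1 + subst1 φ (uu e))) ^ j) =
      if j ≤ d 0 ∧ d 0 - j = e * d 1 then PowerSeries.coeff (d 1) ((1 + φ) ^ j) else 0 := by
    intro j
    rw [hv, MvPowerSeries.coeff_monomial_mul]
    by_cases h1 : Finsupp.single 0 j ≤ d
    · rw [if_pos h1, one_mul, coeff_subst1_uu]
      have e0 : (d - Finsupp.single 0 j : Fin 2 →₀ ℕ) 0 = d 0 - j := by
        rw [Finsupp.tsub_apply]; simp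
      have e1 : (d - Finsupp.single 0 j : Fin 2 →₀ ℕ) 1 = d 1 := by
        rw [Finsupp.tsub_apply]; simp
      rw [e0, e1]
      have hj : j ≤ d 0 := Finsupp.single_le_iff.mp h1
      by_cases h2 : d 0 - j = e * d 1
      · rw [if_pos h2, if_pos ⟨hj, h2⟩]
      · rw [if_neg h2, if_neg (fun hh => h2 hh.2)]
    · rw [if_neg h1, if_neg]
      intro hh
      exact h1 (Finsupp.single_le_iff.mpr hh.1)
  rw [subst1, coeff_mk2]
  rw [finsum_eq_single _ (d 0 - e * d 1) ?_]
  · rw [hcoeff]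
    by_cases hc : e * d 1 ≤ d 0
    · rw [if_pos (by omega : d 0 - e * d 1 ≤ d 0 ∧ d 0 - (d 0 - e * d 1) = e * d 1)]
      rw [if_pos hc]
    · rw [if_neg (by omega), if_neg hc, mul_zero]
  · intro j hj
    rw [hcoeff, if_neg, mul_zero]
    intro hh
    exact hj (by omega)

lemma coeff_B (e : ℕ) (g φ f : PowerSeries ℂ) (d : Fin 2 →₀ ℕ) :
    MvPowerSeries.coeff d
        (subst1 g (uu e) * subst1 f (MvPowerSeries.X 0 * (1 + subst1 φ (uu e)))) =
      if e * d 1 ≤ d 0 then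
        PowerSeries.coeff (d 0 - e * d 1) f *
          PowerSeries.coeff (d 1) (g * (1 + φ) ^ (d 0 - e * d 1))
      else 0 := by
  classical
  rw [MvPowerSeries.coeff_mul, sum_antidiagonal_fin2, Finset.sum_comm]
  have step1 : ∀ c ∈ Finset.HasAntidiagonal.antidiagonal (d 1),
      (∑ a ∈ Finset.HasAntidiagonal.antidiagonal (d 0),
        MvPowerSeries.coeff (fs a.1 c.1) (subst1 g (uu e)) *
          MvPowerSeries.coeff (fs a.2 c.2)
            (subst1 f (MvPowerSeries.X 0 * (1 + subst1 φ (uu e))))) =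
      if e * d 1 ≤ d 0 then
        PowerSeries.coeff c.1 g * (PowerSeries.coeff (d 0 - e * d 1) f *
          PowerSeries.coeff c.2 ((1 + φ) ^ (d 0 - e * d 1)))
      else 0 := by
    intro c hc
    rw [Finset.HasAntidiagonal.mem_antidiagonal] at hc
    have step2 : ∀ a ∈ Finset.HasAntidiagonal.antidiagonal (d 0),
        MvPowerSeries.coeff (fs a.1 c.1) (subst1 g (uu e)) *
          MvPowerSeries.coeff (fs a.2 c.2)
            (subst1 f (MvPowerSeries.X 0 * (1 + subst1 φ (uu e)))) =
        if a = (e * c.1, d 0 - e * c.1) then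
          (if e * c.1 ≤ d 0 ∧ e * c.2 ≤ d 0 - e * c.1 then
            PowerSeries.coeff c.1 g * (PowerSeries.coeff (d 0 - e * c.1 - e * c.2) f *
              PowerSeries.coeff c.2 ((1 + φ) ^ (d 0 - e * c.1 - e * c.2)))
          else 0)
        else 0 := by
      intro a ha
      rw [Finset.HasAntidiagonal.mem_antidiagonal] at ha
      rw [coeff_subst1_uu, coeff_F]
      simp only [fs_apply0, fs_apply1]
      by_cases h1 : a.1 = e * c.1
      · have ha2 : a.2 = d 0 - e * c.1 := by omega
        rw [if_pos h1, if_pos (Prod.ext h1 ha2), ha2]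
        have hle : e * c.1 ≤ d 0 := by omega
        by_cases h2 : e * c.2 ≤ d 0 - e * c.1
        · rw [if_pos h2, if_pos ⟨hle, h2⟩]
        · rw [if_neg h2, mul_zero]
          exact (if_neg (fun hh => h2 hh.2)).symm
      · rw [if_neg h1, zero_mul]
        exact (if_neg (fun hh : a = (e * c.1, d 0 - e * c.1) => h1 (by rw [hh]))).symm
    rw [Finset.sum_congr rfl step2, Finset.sum_ite_eq' (Finset.HasAntidiagonal.antidiagonal (d 0))]
    have hmem : (e * c.1, d 0 - e * c.1) ∈ Finset.HasAntidiagonal.antidiagonal (d 0) ↔ e * c.1 ≤ d 0 := by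
      rw [Finset.HasAntidiagonal.mem_antidiagonal]; omega
    have hcond : (e * c.1 ≤ d 0 ∧ e * c.2 ≤ d 0 - e * c.1) ↔ e * d 1 ≤ d 0 := by
      constructor
      · intro hh
        have : e * c.1 + e * c.2 = e * d 1 := by rw [← Nat.mul_add, hc]
        omega
      · intro hh
        have : e * c.1 + e * c.2 = e * d 1 := by rw [← Nat.mul_add, hc]
        omega
    by_cases hm : e * d 1 ≤ d 0
    · rw [if_pos (hmem.mpr (by
        have : e * c.1 + e * c.2 = e * d 1 := by rw [← Nat.mul_add, hc]
        omega)), if_pos (hcond.mpr hm), if_pos hm]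
      have : d 0 - e * c.1 - e * c.2 = d 0 - e * d 1 := by
        have : e * c.1 + e * c.2 = e * d 1 := by rw [← Nat.mul_add, hc]
        omega
      rw [this]
    · rw [if_neg hm]
      by_cases hmem2 : (e * c.1, d 0 - e * c.1) ∈ Finset.HasAntidiagonal.antidiagonal (d 0)
      · rw [if_pos hmem2, if_neg (fun hh => hm (hcond.mp hh))]
      · rw [if_neg hmem2]
  rw [Finset.sum_congr rfl step1]
  by_cases hm : e * d 1 ≤ d 0
  · simp only [if_pos hm]
    rw [PowerSeries.coeff_mul, Finset.mul_sum]
    apply Finset.sum_congr rfl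
    intro c hc
    ring
  · simp [hm]

lemma coeff_subst1_X0 (g : PowerSeries ℂ) (d : Fin 2 →₀ ℕ) :
    MvPowerSeries.coeff d (subst1 g (MvPowerSeries.X 0)) =
      if d 1 = 0 then PowerSeries.coeff (d 0) g else 0 := by
  classical
  have hc : ∀ j : ℕ, MvPowerSeries.coeff d ((MvPowerSeries.X (R := ℂ) (σ := Fin 2) 0) ^ j) =
      if d = fs j 0 then 1 else 0 := by
    intro j
    rw [MvPowerSeries.X_pow_eq, MvPowerSeries.coeff_monomial]
    congr 1
    rw [eq_iff_iff]
    constructor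
    · intro hh; rw [hh, fs]; simp [Finsupp.single_zero]
    · intro hh; rw [hh, fs]; simp [Finsupp.single_zero]
  rw [subst1, coeff_mk2, finsum_eq_single _ (d 0) ?_]
  · rw [hc]
    by_cases h1 : d 1 = 0
    · rw [if_pos h1, if_pos, mul_one]
      conv_lhs => rw [eq_fs d, h1]
    · rw [if_neg h1, if_neg, mul_zero]
      intro hh
      exact h1 (by have := congrArg (fun z => z 1) hh; simpa using this)
  · intro j hj
    rw [hc, if_neg, mul_zero]
    intro hh
    exact hj (by have := congrArg (fun z => z 0) hh; simpa using this.symm)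

lemma coeff_A (g φ : PowerSeries ℂ) (d : Fin 2 →₀ ℕ) :
    MvPowerSeries.coeff d (subst1 g (MvPowerSeries.X 0) * expY φ) =
      PowerSeries.coeff (d 0) (g * φ ^ (d 1)) / (Nat.factorial (d 1) : ℂ) := by
  classical
  rw [MvPowerSeries.coeff_mul, sum_antidiagonal_fin2]
  have step1 : ∀ a ∈ Finset.HasAntidiagonal.antidiagonal (d 0),
      (∑ c ∈ Finset.HasAntidiagonal.antidiagonal (d 1),
        MvPowerSeries.coeff (fs a.1 c.1) (subst1 g (MvPowerSeries.X 0)) *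
          MvPowerSeries.coeff (fs a.2 c.2) (expY φ)) =
      PowerSeries.coeff a.1 g * (PowerSeries.coeff a.2 (φ ^ (d 1)) /
        (Nat.factorial (d 1) : ℂ)) := by
    intro a ha
    have step2 : ∀ c ∈ Finset.HasAntidiagonal.antidiagonal (d 1),
        MvPowerSeries.coeff (fs a.1 c.1) (subst1 g (MvPowerSeries.X 0)) *
          MvPowerSeries.coeff (fs a.2 c.2) (expY φ) =
        if c = ((0 : ℕ), d 1) then
          PowerSeries.coeff a.1 g * (PowerSeries.coeff a.2 (φ ^ (d 1)) /
            (Nat.factorial (d 1) : ℂ))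
        else 0 := by
      intro c hc
      rw [Finset.HasAntidiagonal.mem_antidiagonal] at hc
      rw [coeff_subst1_X0, expY, coeff_mk2]
      simp only [fs_apply0, fs_apply1]
      by_cases h1 : c.1 = 0
      · have h2 : c.2 = d 1 := by omega
        rw [if_pos h1, if_pos (Prod.ext h1 h2), h2]
      · rw [if_neg h1, zero_mul]
        exact (if_neg (fun hh : c = ((0 : ℕ), d 1) => h1 (by rw [hh]))).symm
    rw [Finset.sum_congr rfl step2, Finset.sum_ite_eq' (Finset.HasAntidiagonal.antidiagonal (d 1))]
    rw [if_pos (by rw [Finset.HasAntidiagonal.mem_antidiagonal]; omega)]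
  rw [Finset.sum_congr rfl step1, PowerSeries.coeff_mul, Finset.sum_div]
  apply Finset.sum_congr rfl
  intro a ha
  rw [mul_div_assoc]

end StirlingAux

namespace StirlingAux

lemma coeff_derivativeFun_iterate (f : PowerSeries ℂ) (k j : ℕ) :
    PowerSeries.coeff j (PowerSeries.derivativeFun^[k] f) =
      PowerSeries.coeff (j + k) f * (Nat.descFactorial (j + k) k : ℂ) := by
  induction k generalizing f j with
  | zero => simp
  | succ k ih =>
    rw [Function.iterate_succ_apply, ih]; erw [PowerSeries.coeff_derivative]
    have h3 : j + (k + 1) = (j + k) + 1 := by ring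
    rw [h3, Nat.succ_descFactorial_succ]
    push_cast
    ring

/-- Lemma C : the LHS finsum of (ii). -/
lemma lhs_eval (e : ℕ) (S : ℕ → ℕ → ℂ) (f : PowerSeries ℂ) (m n : ℕ) :
    (∑ᶠ k : ℕ, S n k * ((Nat.factorial n : ℂ)⁻¹ *
        PowerSeries.coeff m
          (PowerSeries.X ^ (n * e + k) * PowerSeries.derivativeFun^[k] f))) =
    if e * n ≤ m then
      PowerSeries.coeff (m - e * n) f *
        ∑ k ∈ Finset.range (m - e * n + 1),
          S n k * (Nat.factorial n : ℂ)⁻¹ * (Nat.descFactorial (m - e * n) k : ℂ)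
    else 0 := by
  have hcomm : n * e = e * n := Nat.mul_comm n e
  have hterm : ∀ k : ℕ,
      S n k * ((Nat.factorial n : ℂ)⁻¹ *
        PowerSeries.coeff m
          (PowerSeries.X ^ (n * e + k) * PowerSeries.derivativeFun^[k] f)) =
      if e * n ≤ m then
        PowerSeries.coeff (m - e * n) f *
          (S n k * (Nat.factorial n : ℂ)⁻¹ * (Nat.descFactorial (m - e * n) k : ℂ))
      else 0 := by
    intro k
    rw [PowerSeries.coeff_X_pow_mul']
    by_cases h1 : n * e + k ≤ m
    · have hen : e * n ≤ m := by omega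
      rw [if_pos h1, if_pos hen, coeff_derivativeFun_iterate]
      have h2 : m - (n * e + k) + k = m - e * n := by omega
      rw [h2]
      ring
    · rw [if_neg h1]
      by_cases hen : e * n ≤ m
      · rw [if_pos hen]
        have : m - e * n < k := by omega
        rw [Nat.descFactorial_of_lt this]
        push_cast
        ring
      · rw [if_neg hen, mul_zero, mul_zero]
  rw [finsum_congr hterm]
  by_cases hen : e * n ≤ m
  · simp only [if_pos hen]
    rw [finsum_eq_finset_sum_of_support_subset _
        (s := Finset.range (m - e * n + 1)) ?_, ← Finset.mul_sum]
    intro k hk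
    simp only [Function.mem_support, ne_eq] at hk
    simp only [Finset.coe_range, Set.mem_Iio]
    by_contra hcon
    push_neg at hcon
    have h0 : Nat.descFactorial (m - e * n) k = 0 := Nat.descFactorial_of_lt (by omega)
    rw [h0] at hk
    simp at hk
  · simp [hen]

lemma coeff_one_add_pow (g φ : PowerSeries ℂ) (n p : ℕ) :
    PowerSeries.coeff n (g * (1 + φ) ^ p) =
      ∑ k ∈ Finset.range (p + 1),
        PowerSeries.coeff n (g * φ ^ k) * (Nat.factorial k : ℂ)⁻¹ *
          (Nat.descFactorial p k : ℂ) := by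
  have hb : (1 + φ) ^ p = ∑ k ∈ Finset.range (p + 1), φ ^ k * (Nat.choose p k : ℂ⟦X⟧) := by
    rw [add_comm (1 : ℂ⟦X⟧) φ, add_pow]
    apply Finset.sum_congr rfl
    intro k hk
    rw [one_pow, mul_one]
  rw [hb, Finset.mul_sum, map_sum]
  apply Finset.sum_congr rfl
  intro k hk
  have hfac : (Nat.factorial k : ℂ) ≠ 0 := Nat.cast_ne_zero.mpr (Nat.factorial_ne_zero k)
  have hC : ((Nat.choose p k : ℂ⟦X⟧)) = PowerSeries.C (R := ℂ) ((Nat.choose p k : ℂ)) :=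
    (map_natCast (PowerSeries.C (R := ℂ)) _).symm
  rw [hC, ← mul_assoc, PowerSeries.coeff_mul_C, Nat.descFactorial_eq_factorial_mul_choose]
  push_cast
  field_simp

end StirlingAux


open StirlingAux in
/-- Generalized Stirling numbers via generating functions: for a row-finite array
`S(n,k)` and `g, φ ∈ ℂ[[x]]`, the double generating-function identity
`Σ_{n,k} S(n,k)·(x^n/n!)·y^k = g(x)·exp(y·φ(x))` in `ℂ[[x,y]]` holds iff for every
`f ∈ ℂ[[x]]` one has, in `ℂ[[x,λ]]`,
`Σ_{n,k} S(n,k)·(λ^n/n!)·x^{ne+k}·(D^k f)(x) = g(λx^e)·f(x·(1+φ(λx^e)))`.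
(The first variable of `MvPowerSeries (Fin 2) ℂ` is `x`, the second is `y` resp. `λ`;
both identities are stated coefficientwise.) -/
theorem stmt_5 (e : ℕ) (S : ℕ → ℕ → ℂ) (hS : ∀ n, (Function.support (S n)).Finite)
    (g φ : PowerSeries ℂ) :
    (∀ d : Fin 2 →₀ ℕ,
        S (d 0) (d 1) / (Nat.factorial (d 0) : ℂ) =
          MvPowerSeries.coeff d (subst1 g (MvPowerSeries.X 0) * expY φ)) ↔
    (∀ f : PowerSeries ℂ, ∀ d : Fin 2 →₀ ℕ,
        (∑ᶠ k : ℕ, S (d 1) k * ((Nat.factorial (d 1) : ℂ)⁻¹ *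
            PowerSeries.coeff (d 0)
              (PowerSeries.X ^ ((d 1) * e + k) * PowerSeries.derivativeFun^[k] f))) =
          MvPowerSeries.coeff d
            (subst1 g (MvPowerSeries.X 1 * MvPowerSeries.X 0 ^ e) *
              subst1 f (MvPowerSeries.X 0 *
                (1 + subst1 φ (MvPowerSeries.X 1 * MvPowerSeries.X 0 ^ e))))) := by
  constructor
  · intro hi f d
    have hkey : ∀ n k : ℕ, S n k * (Nat.factorial n : ℂ)⁻¹ =
        PowerSeries.coeff n (g * φ ^ k) * (Nat.factorial k : ℂ)⁻¹ := by
      intro n k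
      have h1 := hi (fs n k)
      rw [coeff_A] at h1
      simpa [div_eq_mul_inv] using h1
    rw [lhs_eval e S f (d 0) (d 1), coeff_B]
    by_cases hen : e * d 1 ≤ d 0
    · rw [if_pos hen, if_pos hen, coeff_one_add_pow]
      congr 1
      apply Finset.sum_congr rfl
      intro k hk
      rw [hkey (d 1) k]
    · rw [if_neg hen, if_neg hen]
  · intro hii d
    rw [coeff_A, div_eq_mul_inv, div_eq_mul_inv]
    suffices h : ∀ n p : ℕ, S n p * (Nat.factorial n : ℂ)⁻¹ =
        PowerSeries.coeff n (g * φ ^ p) * (Nat.factorial p : ℂ)⁻¹ from h (d 0) (d 1)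
    intro n
    have H : ∀ p : ℕ,
        (∑ k ∈ Finset.range (p + 1),
          S n k * (Nat.factorial n : ℂ)⁻¹ * (Nat.descFactorial p k : ℂ)) =
        ∑ k ∈ Finset.range (p + 1),
          PowerSeries.coeff n (g * φ ^ k) * (Nat.factorial k : ℂ)⁻¹ *
            (Nat.descFactorial p k : ℂ) := by
      intro p
      have h2 := hii (PowerSeries.X ^ p) (fs (e * n + p) n)
      rw [coeff_B] at h2
      simp only [fs_apply0, fs_apply1] at h2
      rw [lhs_eval] at h2
      have hle : e * n ≤ e * n + p := Nat.le_add_right _ _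
      rw [if_pos hle, if_pos hle] at h2
      have hp : e * n + p - e * n = p := by omega
      rw [hp, PowerSeries.coeff_X_pow, if_pos rfl, one_mul, one_mul,
        coeff_one_add_pow] at h2
      exact h2
    intro p
    induction p using Nat.strong_induction_on with
    | _ p ih =>
      have h3 := H p
      rw [Finset.sum_range_succ, Finset.sum_range_succ] at h3
      have h4 : (∑ k ∈ Finset.range p,
          S n k * (Nat.factorial n : ℂ)⁻¹ * (Nat.descFactorial p k : ℂ)) =
          ∑ k ∈ Finset.range p,
            PowerSeries.coeff n (g * φ ^ k) * (Nat.factorial k : ℂ)⁻¹ *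
              (Nat.descFactorial p k : ℂ) := by
        apply Finset.sum_congr rfl
        intro k hk
        rw [ih k (Finset.mem_range.mp hk)]
      rw [h4] at h3
      have h5 := add_left_cancel h3
      have h6 : ((Nat.descFactorial p p : ℕ) : ℂ) ≠ 0 := by
        rw [Nat.descFactorial_self]
        exact Nat.cast_ne_zero.mpr (Nat.factorial_ne_zero p)
      exact mul_right_cancel₀ h6 h5
end

section
/- Let x > 0 be real, and let λ, θ ∈ ℝ satisfy |λ| + |θ| < 1/(4x²). For f : ℝ → ℝ define U_λ[f](x) := (1 − 4λx²)^{−3/4} · f( x/√(1 − 4λx²) ). Then 1 − 4λx² > 0, the point s := x/√(1 − 4λx²) satisfies |θ| < 1/(4s²), and U_λ[U_θ[f]](x) = U_{λ+θ}[f](x); explicitly, (1 − 4λx²)^{−3/4} · (1 − 4θs²)^{−3/4} · f( s/√(1 − 4θs²) ) = (1 − 4(λ+θ)x²)^{−3/4} · f( x/√(1 − 4(λ+θ)x²) ). (This is the one-parameter group generated by the Bargmann–Fock image of Ω = (a⁺)²aa⁺ + a⁺a(a⁺)².) -/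
open Real

/-- The one-parameter group `U_λ[f](x) = (1−4λx²)^{−3/4}·f(x/√(1−4λx²))` integrating
`exp(λ ρ_BF(Ω))` for `Ω = (a⁺)²aa⁺ + a⁺a(a⁺)²`. -/
noncomputable def U (lam : ℝ) (f : ℝ → ℝ) (x : ℝ) : ℝ :=
  (1 - 4 * lam * x ^ 2) ^ (-(3 : ℝ) / 4) * f (x / Real.sqrt (1 - 4 * lam * x ^ 2))

/-- The group law `U_λ ∘ U_θ = U_{λ+θ}` for suitably small parameters:
if `x > 0` and `|λ| + |θ| < 1/(4x²)` then `1 − 4λx² > 0`, the point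
`s = x/√(1−4λx²)` satisfies `|θ| < 1/(4s²)`, and `U_λ[U_θ[f]](x) = U_{λ+θ}[f](x)`. -/
theorem stmt_6 (x lam θ : ℝ) (hx : 0 < x)
    (h : |lam| + |θ| < 1 / (4 * x ^ 2)) (f : ℝ → ℝ) :
    0 < 1 - 4 * lam * x ^ 2 ∧
    |θ| < 1 / (4 * (x / Real.sqrt (1 - 4 * lam * x ^ 2)) ^ 2) ∧
    U lam (U θ f) x = U (lam + θ) f x := by
  have hx2 : 0 < x ^ 2 := by positivity
  have hl : |lam| < 1 / (4 * x ^ 2) := by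
    have := abs_nonneg θ; linarith
  have hsum : (|lam| + |θ|) * (4 * x ^ 2) < 1 := by
    have := (lt_div_iff₀ (by positivity : (0:ℝ) < 4 * x ^ 2)).mp h
    linarith
  have hA : 0 < 1 - 4 * lam * x ^ 2 := by
    have : lam ≤ |lam| := le_abs_self lam
    nlinarith [abs_nonneg θ]
  have hC : 0 < 1 - 4 * (lam + θ) * x ^ 2 := by
    have h1 : lam ≤ |lam| := le_abs_self lam
    have h2 : θ ≤ |θ| := le_abs_self θ
    nlinarith
  set A := 1 - 4 * lam * x ^ 2 with hAdef
  set C := 1 - 4 * (lam + θ) * x ^ 2 with hCdef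
  have hsA : Real.sqrt A > 0 := Real.sqrt_pos.mpr hA
  have hs2 : (x / Real.sqrt A) ^ 2 = x ^ 2 / A := by
    rw [div_pow, Real.sq_sqrt hA.le]
  have hB : 1 - 4 * θ * (x / Real.sqrt A) ^ 2 = C / A := by
    rw [hs2]; field_simp [hAdef, hCdef]; ring
  have hθbound : |θ| < 1 / (4 * (x / Real.sqrt A) ^ 2) := by
    rw [hs2]
    have hpos : 0 < 4 * (x ^ 2 / A) := by positivity
    rw [lt_div_iff₀ hpos]
    have hC' : 4 * |θ| * x ^ 2 < A := by
      have : lam ≤ |lam| := le_abs_self lam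
      nlinarith
    rw [div_eq_mul_inv]
    have hAinv : 0 < A⁻¹ := by positivity
    calc |θ| * (4 * (x ^ 2 * A⁻¹)) = (4 * |θ| * x ^ 2) * A⁻¹ := by ring
    _ < A * A⁻¹ := by exact mul_lt_mul_of_pos_right hC' hAinv
    _ = 1 := mul_inv_cancel₀ (ne_of_gt hA)
  refine ⟨hA, hθbound, ?_⟩
  unfold U
  rw [hB]
  have hCA : (C / A) ^ (-(3:ℝ)/4) = C ^ (-(3:ℝ)/4) / A ^ (-(3:ℝ)/4) :=
    Real.div_rpow hC.le hA.le _
  have hsqrt : Real.sqrt (C / A) = Real.sqrt C / Real.sqrt A := Real.sqrt_div' C hA.le ▸ by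
    rw [Real.sqrt_div hC.le]
  have hArp : A ^ (-(3:ℝ)/4) ≠ 0 := ne_of_gt (Real.rpow_pos_of_pos hA _)
  have hsC : Real.sqrt C > 0 := Real.sqrt_pos.mpr hC
  rw [hCA, hsqrt]
  have harg : x / Real.sqrt A / (Real.sqrt C / Real.sqrt A) = x / Real.sqrt C := by
    field_simp
  rw [harg]
  field_simp
  rw [← hAdef, show 1 - 4 * x ^ 2 * (lam + θ) = C by rw [hCdef]; ring]
end

section
/- Let x > 0 be real and let f : ℝ → ℝ be differentiable at x. Then the function λ ↦ U_λ[f](x) = (1 − 4λx²)^{−3/4} · f( x/√(1 − 4λx²) ), defined for |λ| < 1/(4x²), is differentiable at λ = 0 with derivative 2x³·f′(x) + 3x²·f(x). (Equivalently, the infinitesimal generator of the one-parameter group U_λ is x²(d/dx)x + x(d/dx)x², since x²·(x f)′(x) + x·(x² f)′(x) = 2x³ f′(x) + 3x² f(x).) -/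
open Real

/-- Tangent vector at `λ = 0`: for `x > 0` and `f` differentiable at `x`,
`λ ↦ U_λ[f](x)` is differentiable at `0` with derivative `2x³·f′(x) + 3x²·f(x)`,
i.e. the infinitesimal generator of `U_λ` is `x²(d/dx)x + x(d/dx)x²`. -/
theorem stmt_7 (x : ℝ) (hx : 0 < x) (f : ℝ → ℝ) (f' : ℝ)
    (hf : HasDerivAt f f' x) :
    HasDerivAt (fun lam => U lam f x) (2 * x ^ 3 * f' + 3 * x ^ 2 * f x) 0 := by
  have hu : HasDerivAt (fun l : ℝ => 1 - 4 * l * x ^ 2) (-(4 * x ^ 2)) 0 := by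
    have h1 : HasDerivAt (fun l : ℝ => 1 - 4 * x ^ 2 * l) (-(4 * x ^ 2)) 0 := by
      simpa using ((hasDerivAt_id (0 : ℝ)).const_mul (4 * x ^ 2)).const_sub 1
    have he : (fun l : ℝ => 1 - 4 * l * x ^ 2) = fun l : ℝ => 1 - 4 * x ^ 2 * l := by
      funext l; ring
    rw [he]; exact h1
  have hu0 : (fun l : ℝ => 1 - 4 * l * x ^ 2) 0 = 1 := by norm_num
  have hg : HasDerivAt (fun l : ℝ => (1 - 4 * l * x ^ 2) ^ (-(3:ℝ)/4))
      (3 * x ^ 2) 0 := by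
    have h := hu.rpow_const (p := -(3:ℝ)/4) (Or.inl (by norm_num))
    convert h using 1
    norm_num [Real.one_rpow]; ring
  have hs : HasDerivAt (fun l : ℝ => Real.sqrt (1 - 4 * l * x ^ 2))
      (-(4 * x ^ 2) / (2 * Real.sqrt 1)) 0 := by
    have := hu.sqrt (by norm_num)
    simpa [hu0] using this
  have hh : HasDerivAt (fun l : ℝ => x / Real.sqrt (1 - 4 * l * x ^ 2))
      (2 * x ^ 3) 0 := by
    have := (hasDerivAt_const (0:ℝ) x).div hs (by simp)
    have h2 : (0 * Real.sqrt (1 - 4 * 0 * x ^ 2) -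
        x * (-(4 * x ^ 2) / (2 * Real.sqrt 1))) / Real.sqrt (1 - 4 * 0 * x ^ 2) ^ 2
        = 2 * x ^ 3 := by
      simp [Real.sqrt_one]; ring
    rw [h2] at this
    exact this
  have hfx : HasDerivAt f f' ((fun l : ℝ => x / Real.sqrt (1 - 4 * l * x ^ 2)) 0) := by
    simpa [Real.sqrt_one] using hf
  have hcomp := hfx.comp 0 hh
  have := hg.mul hcomp
  have h0 : ((fun l : ℝ => (1 - 4 * l * x ^ 2) ^ (-(3:ℝ)/4)) 0) = 1 := by
    norm_num
  simp only [Function.comp] at this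
  convert this using 1
  · rfl
  · rfl
  · rfl
  simp [Real.sqrt_one, Real.one_rpow]
  ring
end

section
/- (Kurbanov–Maksimov) Let K be a field of characteristic zero and let φ be a linear endomorphism of K[x]. Define a sequence of polynomials (P_k)_{k∈ℕ} by the recursion P_0 = φ(1) and P_{n+1} = φ( x^{n+1}/(n+1)! ) − Σ_{k=0}^{n} P_k · x^{n+1−k}/(n+1−k)!. Then for every polynomial Q ∈ K[x], φ(Q) = Σ_{k∈ℕ} P_k · (D^k Q), where D is the formal derivative and all but finitely many terms vanish (D^k Q = 0 for k > deg Q); i.e., φ is the sum of the summable series Σ_{k≥0} P_k(X) D^k in the topology of simple convergence on End(K[x]) with K[x] discrete. -/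
open Polynomial

/-- (Kurbanov–Maksimov) Over a field `K` of characteristic zero, any linear endomorphism
`φ` of `K[x]` is the sum of the summable series `Σ_{k≥0} P_k(X) D^k`, where the
polynomials `P_k` satisfy `P_0 = φ(1)` and
`P_{n+1} = φ(x^{n+1}/(n+1)!) − Σ_{k=0}^{n} P_k·x^{n+1−k}/(n+1−k)!`. -/
theorem stmt_8 (K : Type*) [Field K] [CharZero K]
    (φ : Polynomial K →ₗ[K] Polynomial K) (P : ℕ → Polynomial K)
    (h0 : P 0 = φ 1)
    (hrec : ∀ n : ℕ,
      P (n + 1) =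
        φ ((((n + 1).factorial : K)⁻¹) • Polynomial.X ^ (n + 1)) -
          ∑ k ∈ Finset.range (n + 1),
            P k * ((((n + 1 - k).factorial : K)⁻¹) • Polynomial.X ^ (n + 1 - k))) :
    ∀ Q : Polynomial K,
      φ Q = ∑ᶠ k : ℕ, P k * (⇑Polynomial.derivative)^[k] Q := by
  -- the recursion rearranged: φ on the divided-power basis
  have hB : ∀ n : ℕ, φ (((n.factorial : K)⁻¹) • X ^ n)
      = ∑ k ∈ Finset.range (n + 1), P k * (((n - k).factorial : K)⁻¹ • X ^ (n - k)) := by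
    intro n
    cases n with
    | zero => simpa using h0.symm
    | succ n =>
      rw [Finset.sum_range_succ, hrec n]
      simp only [Nat.sub_self, Nat.factorial_zero, Nat.cast_one, inv_one, pow_zero, one_smul,
        mul_one]
      ring
  -- hence φ on monomials
  have key : ∀ n : ℕ, φ (X ^ n)
      = ∑ k ∈ Finset.range (n + 1), P k * (⇑derivative)^[k] ((X : Polynomial K) ^ n) := by
    intro n
    have hf : (n.factorial : K) ≠ 0 := by exact_mod_cast n.factorial_ne_zero
    have h1 : (X ^ n : Polynomial K) = (n.factorial : K) • (((n.factorial : K)⁻¹) • X ^ n) := by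
      rw [smul_smul, mul_inv_cancel₀ hf, one_smul]
    conv_lhs => rw [h1, map_smul, hB n]
    rw [Finset.smul_sum]
    refine Finset.sum_congr rfl fun k hk => ?_
    rw [Finset.mem_range, Nat.lt_succ_iff] at hk
    rw [iterate_derivative_X_pow_eq_smul]
    have hfk : ((n - k).factorial : K) ≠ 0 := by exact_mod_cast (n - k).factorial_ne_zero
    have hd : (n.descFactorial k : K) = (n.factorial : K) * ((n - k).factorial : K)⁻¹ := by
      have h2 : ((n - k).factorial : K) * (n.descFactorial k : K) = (n.factorial : K) := by
        exact_mod_cast Nat.factorial_mul_descFactorial hk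
      field_simp
      linear_combination h2
    rw [hd, mul_smul_comm, mul_smul_comm, mul_smul]
  intro Q
  set N := Q.natDegree with hN
  have hsupp : (Function.support fun k => P k * (⇑derivative)^[k] Q)
      ⊆ ↑(Finset.range (N + 1)) := by
    intro k hk
    simp only [Function.mem_support] at hk
    simp only [Finset.coe_range, Set.mem_Iio, Nat.lt_succ_iff]
    by_contra h
    exact hk (by rw [Polynomial.iterate_derivative_eq_zero (by omega), mul_zero])
  rw [finsum_eq_sum_of_support_subset _ hsupp]
  have hQ : Q = ∑ m ∈ Finset.range (N + 1), Q.coeff m • X ^ m := by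
    conv_lhs => rw [Q.as_sum_range]
    exact Finset.sum_congr rfl fun m _ => (smul_X_eq_monomial).symm
  have hpow : ∀ (k : ℕ) (p : Polynomial K),
      (⇑derivative)^[k] p = ((derivative : Polynomial K →ₗ[K] Polynomial K) ^ k) p := by
    intro k p; rw [Module.End.pow_apply]
  calc φ Q = φ (∑ m ∈ Finset.range (N + 1), Q.coeff m • X ^ m) := by rw [← hQ]
    _ = ∑ m ∈ Finset.range (N + 1), Q.coeff m • φ (X ^ m) := by
        rw [map_sum]; exact Finset.sum_congr rfl fun m _ => map_smul φ _ _
    _ = ∑ m ∈ Finset.range (N + 1), Q.coeff m •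
          ∑ k ∈ Finset.range (N + 1), P k * (⇑derivative)^[k] ((X : Polynomial K) ^ m) := by
        refine Finset.sum_congr rfl fun m hm => ?_
        rw [Finset.mem_range, Nat.lt_succ_iff] at hm
        rw [key m]
        congr 1
        refine Finset.sum_subset (Finset.range_subset_range.2 (by omega)) ?_
        intro k _ hk
        simp only [Finset.mem_range, Nat.lt_succ_iff, not_le] at hk
        rw [Polynomial.iterate_derivative_eq_zero
          (lt_of_le_of_lt (natDegree_X_pow_le m) hk), mul_zero]
    _ = ∑ k ∈ Finset.range (N + 1), P k * (⇑derivative)^[k] Q := by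
        simp_rw [Finset.smul_sum]
        rw [Finset.sum_comm]
        refine Finset.sum_congr rfl fun k _ => ?_
        conv_rhs => rw [hQ]
        rw [hpow, map_sum, Finset.mul_sum]
        refine Finset.sum_congr rfl fun m _ => ?_
        rw [map_smul, ← hpow, mul_smul_comm]
end

section
/- (Endomorphism expansion in ladder operators) Let K be a field, V a K-vector space, and let a = (a_n)_{n∈ℕ} and b = (b_n)_{n∈ℕ} be two bases of V such that b_0 = λ·a_0 for some nonzero scalar λ ∈ K. Let R_a be the raising operator of a (the linear endomorphism with R_a(a_n) = a_{n+1}) and L_b the lowering operator of b (the linear endomorphism with L_b(b_0) = 0 and L_b(b_{n+1}) = b_n). For a polynomial P ∈ K[x] write P(a) := Σ_n ⟨P,x^n⟩ a_n ∈ V and P(R_a) := Σ_n ⟨P,x^n⟩ R_a^n ∈ End(V), where ⟨P,x^n⟩ is the coefficient of x^n in P. Given any linear endomorphism φ of V, define polynomials (P_n)_{n∈ℕ} by the recursion λ·P_0(a) = φ(b_0) and λ·P_{n+1}(a) = φ(b_{n+1}) − Σ_{k=0}^{n} P_k(R_a)(b_{n+1−k}) (each P_n is uniquely determined since a is a basis).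 Then for every v ∈ V, φ(v) = Σ_{n∈ℕ} P_n(R_a)( L_b^n(v) ), where all but finitely many terms vanish (L_b^n(v) = 0 for n larger than the degree of v with respect to b). -/
/-- For a polynomial `P = Σ ⟨P,x^n⟩ x^n` and a sequence `a` of vectors,
`P(a) := Σ_n ⟨P,x^n⟩ a_n`. -/
noncomputable def polyVec {K V : Type*} [Field K] [AddCommGroup V] [Module K V]
    (a : ℕ → V) (P : Polynomial K) : V :=
  ∑ n ∈ Finset.range (P.natDegree + 1), P.coeff n • a n

lemma polyVec_eq_aeval {K V : Type*} [Field K] [AddCommGroup V] [Module K V]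
    (a : ℕ → V) (Ra : Module.End K V) (hRa : ∀ n, Ra (a n) = a (n + 1))
    (Q : Polynomial K) : polyVec a Q = (Polynomial.aeval Ra Q) (a 0) := by
  have hpow : ∀ n, (Ra ^ n) (a 0) = a n := by
    intro n
    induction n with
    | zero => simp
    | succ n ih => rw [pow_succ', Module.End.mul_apply, ih, hRa]
  rw [Polynomial.aeval_endomorphism, polyVec,
    Polynomial.sum_over_range' Q (f := fun n c => c • (Ra ^ n) (a 0)) (by simp)
      (Q.natDegree + 1) (Nat.lt_succ_self _)]
  exact Finset.sum_congr rfl fun n _ => by rw [hpow]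

/-- (Endomorphism expansion in ladder operators) Let `a`, `b` be bases of `V` with
`b_0 = λ·a_0`, `λ ≠ 0`, let `R_a` be the raising operator of `a` and `L_b` the lowering
operator of `b`.  If the polynomials `P_n` satisfy the recursion
`λ·P_0(a) = φ(b_0)`, `λ·P_{n+1}(a) = φ(b_{n+1}) − Σ_{k=0}^{n} P_k(R_a)(b_{n+1−k})`,
then `φ(v) = Σ_n P_n(R_a)(L_b^n(v))` for every `v ∈ V` (all but finitely many terms
vanish). -/
theorem stmt_9 {K V : Type*} [Field K] [AddCommGroup V] [Module K V]
    (a b : Module.Basis ℕ K V) (lam : K) (hlam : lam ≠ 0) (hb0 : b 0 = lam • a 0)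
    (Ra Lb : Module.End K V)
    (hRa : ∀ n, Ra (a n) = a (n + 1))
    (hLb0 : Lb (b 0) = 0) (hLb : ∀ n, Lb (b (n + 1)) = b n)
    (φ : Module.End K V) (P : ℕ → Polynomial K)
    (hP0 : lam • polyVec a (P 0) = φ (b 0))
    (hPrec : ∀ n : ℕ,
      lam • polyVec a (P (n + 1)) =
        φ (b (n + 1)) -
          ∑ k ∈ Finset.range (n + 1), (Polynomial.aeval Ra (P k)) (b (n + 1 - k))) :
    ∀ v : V, φ v = ∑ᶠ n : ℕ, (Polynomial.aeval Ra (P n)) ((Lb ^ n) v) := by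
  have hpv : ∀ Q : Polynomial K, lam • polyVec a Q = (Polynomial.aeval Ra Q) (b 0) := by
    intro Q
    rw [polyVec_eq_aeval a Ra hRa, hb0, map_smul]
  -- key identity on basis vectors
  have hbase : ∀ m : ℕ,
      φ (b m) = ∑ k ∈ Finset.range (m + 1), (Polynomial.aeval Ra (P k)) (b (m - k)) := by
    intro m
    cases m with
    | zero => simp [← hP0, hpv]
    | succ n =>
      have h := hPrec n
      rw [hpv] at h
      rw [Finset.sum_range_succ, Nat.sub_self, h]
      abel
  -- action of powers of Lb on basis vectors
  have hLbpow : ∀ n m, (Lb ^ n) (b m) = if n ≤ m then b (m - n) else 0 := by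
    intro n
    induction n with
    | zero => intro m; simp
    | succ n ih =>
      intro m
      cases m with
      | zero =>
        rw [pow_succ, Module.End.mul_apply, hLb0, map_zero]
        simp
      | succ m =>
        rw [pow_succ, Module.End.mul_apply, hLb m, ih]
        simp [Nat.succ_le_succ_iff, Nat.succ_sub_succ]
  intro v
  set c := b.repr v with hc
  set s := c.support with hs
  set N := s.sup id with hN
  have hmN : ∀ m ∈ s, m ≤ N := fun m hm => Finset.le_sup (f := id) hm
  have hv : ∑ m ∈ s, c m • b m = v := by
    conv_rhs => rw [← b.linearCombination_repr v]
    rw [Finsupp.linearCombination_apply, Finsupp.sum]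
  -- the finsum has support inside range (N+1)
  have hzero : ∀ n, N < n → (Lb ^ n) v = 0 := by
    intro n hn
    rw [← hv, map_sum]
    refine Finset.sum_eq_zero fun m hm => ?_
    rw [map_smul, hLbpow]
    have : ¬ n ≤ m := by have := hmN m hm; omega
    simp [this]
  have hsub : (Function.support fun n => (Polynomial.aeval Ra (P n)) ((Lb ^ n) v)) ⊆
      ↑(Finset.range (N + 1)) := by
    intro n hn
    simp only [Finset.coe_range, Set.mem_Iio]
    by_contra h
    push_neg at h
    have h0 := hzero n (by omega)
    simp only [Function.mem_support, h0, map_zero, ne_eq, not_true] at hn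
  rw [finsum_eq_finset_sum_of_support_subset _ hsub]
  -- now compute both sides via the basis expansion of v
  conv_lhs => rw [← hv]
  rw [map_sum]
  have : ∀ n ∈ Finset.range (N + 1),
      (Polynomial.aeval Ra (P n)) ((Lb ^ n) v) =
        ∑ m ∈ s, c m • (if n ≤ m then (Polynomial.aeval Ra (P n)) (b (m - n)) else 0) := by
    intro n _
    rw [← hv, map_sum, map_sum]
    refine Finset.sum_congr rfl fun m hm => ?_
    rw [map_smul, map_smul, hLbpow]
    split <;> simp
  rw [Finset.sum_congr rfl this, Finset.sum_comm]
  refine Finset.sum_congr rfl fun m hm => ?_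
  rw [map_smul, hbase m, ← Finset.smul_sum]
  congr 1
  rw [← Finset.sum_subset (Finset.range_subset_range.mpr (Nat.succ_le_succ (hmN m hm)))
    (fun x _ hx => ?_)]
  · refine Finset.sum_congr rfl fun k hk => ?_
    rw [if_pos (by simpa [Nat.lt_succ_iff] using Finset.mem_range.mp hk)]
  · rw [if_neg (by simpa [Nat.lt_succ_iff] using Finset.mem_range.not.mp hx)]
end

section
/- Let K be a field, α : ℕ → K a sequence of nonzero scalars, and β : ℕ → K a sequence of nonzero scalars with β_0 = 1. Let φ be a continuous linear endomorphism of V̂ (product topology over discrete K). Then there exists a sequence of polynomials (P_n)_{n∈ℕ} in K[x] such that φ is the sum of the summable family (R̂_{β↑}^n ∘ P_n(L̂_{α↓}))_{n∈ℕ}: explicitly, for every S ∈ V̂ and every k ∈ ℕ, (φ S)(k) = Σ_{n=0}^{k} ( R̂_{β↑}^n ( P_n(L̂_{α↓})(S) ) )(k), where for a polynomial P, P(L̂_{α↓}) := Σ_j ⟨P,x^j⟩ L̂_{α↓}^j, and the terms with n > k vanish because (R̂_{β↑}^n T)(k) = 0 for n > k. -/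
/-- The "extended lowering"-type operator on `V̂ = ℕ → K` with coefficients `γ`:
`(S)(n) ↦ γ_n·S(n+1)`. -/
def lowOp (K : Type*) [Field K] (γ : ℕ → K) : (ℕ → K) →ₗ[K] (ℕ → K) where
  toFun S := fun n => γ n * S (n + 1)
  map_add' S T := by funext n; simp [mul_add]
  map_smul' c S := by funext n; simp [mul_left_comm]

/-- The "extended raising"-type operator on `V̂ = ℕ → K` with coefficients `γ`:
`(S)(0) ↦ 0`, `(S)(n+1) ↦ γ_n·S(n)`. -/
def raiseOp (K : Type*) [Field K] (γ : ℕ → K) : (ℕ → K) →ₗ[K] (ℕ → K) where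
  toFun S := fun n => match n with
    | 0 => 0
    | n + 1 => γ n * S n
  map_add' S T := by funext n; cases n <;> simp [mul_add]
  map_smul' c S := by funext n; cases n <;> simp [mul_left_comm]

section Aux
variable {K : Type*} [Field K]

noncomputable def Aprod (α : ℕ → K) (m j : ℕ) : K := ∏ i ∈ Finset.range j, α (m + i)

noncomputable def Bprod (β : ℕ → K) (k n : ℕ) : K := ∏ i ∈ Finset.range n, β (k - i)

lemma lowOp_pow_apply (α : ℕ → K) (j : ℕ) (S : ℕ → K) (m : ℕ) :
    ((lowOp K α ^ j) S) m = Aprod α m j * S (m + j) := by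
  induction j generalizing S with
  | zero => simp [Aprod]
  | succ j ih =>
    rw [pow_succ, Module.End.mul_apply, ih]
    have h1 : (lowOp K α S) (m + j) = α (m + j) * S (m + j + 1) := rfl
    rw [h1]
    simp only [Aprod, Finset.prod_range_succ, show m + (j + 1) = m + j + 1 from rfl]
    ring

lemma raiseOp_pow_apply (γ : ℕ → K) (n : ℕ) (T : ℕ → K) (k : ℕ) :
    ((raiseOp K γ ^ n) T) k =
      if n ≤ k then (∏ i ∈ Finset.range n, γ (k - 1 - i)) * T (k - n) else 0 := by
  induction n generalizing T with
  | zero => simp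
  | succ n ih =>
    rw [pow_succ, Module.End.mul_apply, ih]
    by_cases h : n + 1 ≤ k
    · rw [if_pos (by omega), if_pos h]
      obtain ⟨d, hd⟩ : ∃ d, k - n = d + 1 := ⟨k - n - 1, by omega⟩
      rw [hd]
      have h1 : (raiseOp K γ T) (d + 1) = γ d * T d := rfl
      rw [h1, Finset.prod_range_succ]
      have hd1 : d = k - 1 - n := by omega
      have hd2 : d = k - (n + 1) := by omega
      rw [← hd1, ← hd2]; ring
    · by_cases h2 : n ≤ k
      · have hk : k = n := by omega
        rw [if_pos h2, if_neg h, hk]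
        rw [Nat.sub_self]
        have : (raiseOp K γ) T 0 = 0 := rfl
        rw [this, mul_zero]
      · rw [if_neg h2, if_neg h]

lemma aeval_apply_eq_sum (f : (ℕ → K) →ₗ[K] (ℕ → K)) (P : Polynomial K) (S : ℕ → K) (m : ℕ)
    (N : ℕ) (h : ∀ i, N ≤ i → P.coeff i = 0) :
    (Polynomial.aeval f P) S m = ∑ i ∈ Finset.range N, P.coeff i * ((f ^ i) S m) := by
  rcases eq_or_ne P 0 with rfl | hP
  · simp
  · have hdeg : P.natDegree < N := by
      by_contra hc
      exact hP (Polynomial.leadingCoeff_eq_zero.mp (h _ (le_of_not_gt hc)))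
    rw [Polynomial.aeval_eq_sum_range' hdeg]
    rw [LinearMap.sum_apply]
    rw [Finset.sum_apply]
    exact Finset.sum_congr rfl fun i _ => by simp [smul_eq_mul]

end Aux

section Aux2
variable {K : Type*} [Field K]

noncomputable def coeffAux (α β : ℕ → K) (c : ℕ → ℕ → K) (n : ℕ) : ℕ → K :=
  fun j =>
    (c n j - ∑ m ∈ (Finset.range n).attach,
        (if n - m.1 ≤ j then
          Bprod β n m.1 * Aprod α (n - m.1) (j - (n - m.1)) * coeffAux α β c m.1 (j - (n - m.1))
        else 0)) / (Bprod β n n * Aprod α 0 j)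
termination_by n
decreasing_by exact Finset.mem_range.mp m.2

lemma coeffAux_spec (α β : ℕ → K) (c : ℕ → ℕ → K)
    (hα : ∀ n, α n ≠ 0) (hβ : ∀ n, β n ≠ 0) (k j : ℕ) :
    ∑ n ∈ Finset.range (k + 1),
      (if k - n ≤ j then
        Bprod β k n * Aprod α (k - n) (j - (k - n)) * coeffAux α β c n (j - (k - n))
      else 0) = c k j := by
  rw [Finset.sum_range_succ]
  have hlast : (if k - k ≤ j then
      Bprod β k k * Aprod α (k - k) (j - (k - k)) * coeffAux α β c k (j - (k - k))
    else 0) = Bprod β k k * Aprod α 0 j * coeffAux α β c k j := by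
    rw [Nat.sub_self]; simp
  rw [hlast]
  have hne : Bprod β k k * Aprod α 0 j ≠ 0 := by
    apply mul_ne_zero
    · exact Finset.prod_ne_zero_iff.mpr fun i _ => hβ _
    · exact Finset.prod_ne_zero_iff.mpr fun i _ => hα _
  rw [coeffAux, mul_div_cancel₀ _ hne]
  rw [Finset.sum_attach (Finset.range k) (fun m =>
    (if k - m ≤ j then
      Bprod β k m * Aprod α (k - m) (j - (k - m)) * coeffAux α β c m (j - (k - m))
    else 0))]
  ring

lemma coeffAux_support (α β : ℕ → K) (c : ℕ → ℕ → K)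
    (hc : ∀ n, ∃ N, ∀ j, N ≤ j → c n j = 0) :
    ∀ n, ∃ D, ∀ j, D ≤ j → coeffAux α β c n j = 0 := by
  intro n
  induction n using Nat.strong_induction_on with
  | _ n ih =>
    obtain ⟨Nc, hNc⟩ := hc n
    have h2 : ∀ m : {x // x ∈ Finset.range n}, ∃ D, ∀ j, D ≤ j → coeffAux α β c m.1 j = 0 :=
      fun m => ih m.1 (Finset.mem_range.mp m.2)
    choose Dm hDm using h2
    refine ⟨max Nc ((Finset.range n).attach.sup fun m => (n - m.1) + Dm m), fun j hj => ?_⟩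
    rw [coeffAux]
    have hc0 : c n j = 0 := hNc j (le_trans (le_max_left _ _) hj)
    have hsum : ∑ m ∈ (Finset.range n).attach,
        (if n - m.1 ≤ j then
          Bprod β n m.1 * Aprod α (n - m.1) (j - (n - m.1)) * coeffAux α β c m.1 (j - (n - m.1))
        else 0) = 0 := by
      apply Finset.sum_eq_zero
      intro m _
      split
      · have h1 : (n - m.1) + Dm m ≤ (Finset.range n).attach.sup fun m => (n - m.1) + Dm m :=
          Finset.le_sup (f := fun m => (n - m.1) + Dm m) (Finset.mem_attach _ m)
        have hle : (n - m.1) + Dm m ≤ j := le_trans (le_trans h1 (le_max_right _ _)) hj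
        rw [hDm m _ (by omega), mul_zero]
      · rfl
    rw [hc0, hsum, sub_zero, zero_div]

end Aux2

/-- Every continuous linear endomorphism `φ` of `V̂ = ℕ → K` (product topology over
discrete `K`) is the sum of a summable family `(R̂_{β↑}^n ∘ P_n(L̂_{α↓}))_n` for some
polynomials `P_n`; here `(L̂_{α↓}S)(n) = α_n·S(n+1)` and `(R̂_{β↑}S)(0) = 0`,
`(R̂_{β↑}S)(n+1) = β_{n+1}·S(n)`.  Explicitly, for every `S` and `k`,
`(φS)(k) = Σ_{n=0}^{k} (R̂_{β↑}^n(P_n(L̂_{α↓})(S)))(k)`, the terms with `n > k`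
vanishing. -/
theorem stmt_17 (K : Type*) [Field K] (α β : ℕ → K)
    (hα : ∀ n, α n ≠ 0) (hβ : ∀ n, β n ≠ 0) (hβ0 : β 0 = 1)
    (φ : (ℕ → K) →ₗ[K] (ℕ → K))
    (hφ : @Continuous (ℕ → K) (ℕ → K)
      (@Pi.topologicalSpace ℕ (fun _ => K) (fun _ => ⊥))
      (@Pi.topologicalSpace ℕ (fun _ => K) (fun _ => ⊥)) φ) :
    ∃ P : ℕ → Polynomial K, ∀ (S : ℕ → K) (k : ℕ),
      φ S k = ∑ n ∈ Finset.range (k + 1),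
        (((raiseOp K fun m => β (m + 1)) ^ n)
          ((Polynomial.aeval (lowOp K α) (P n)) S)) k := by
  classical
  letI : TopologicalSpace K := ⊥
  haveI : DiscreteTopology K := ⟨rfl⟩
  have hφ' : Continuous φ := hφ
  set c : ℕ → ℕ → K := fun k j => φ (Pi.single j 1) k with hc_def
  have hcont : ∀ k, ∃ N : ℕ, ∀ S : ℕ → K, (∀ j < N, S j = 0) → φ S k = 0 := by
    intro k
    have hck : Continuous fun S : ℕ → K => φ S k := (continuous_apply k).comp hφ'
    have hopen : IsOpen {S : ℕ → K | φ S k = 0} :=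
      hck.isOpen_preimage {0} (isOpen_discrete _)
    obtain ⟨I, u, hu, hsub⟩ := isOpen_pi_iff.mp hopen 0 (by simp)
    refine ⟨I.sup id + 1, fun S hS => ?_⟩
    refine hsub fun i hi => ?_
    have h0 : S i = 0 := hS i (Nat.lt_succ_of_le (Finset.le_sup (f := id) hi))
    rw [h0]
    simpa using (hu i hi).2
  have hrep : ∀ k, (∀ j, (hcont k).choose ≤ j → c k j = 0) ∧
      ∀ S : ℕ → K, φ S k = ∑ j ∈ Finset.range ((hcont k).choose), c k j * S j := by
    intro k
    set N := (hcont k).choose with hNdef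
    have hN := (hcont k).choose_spec
    constructor
    · intro j hj
      show φ (Pi.single j 1) k = 0
      apply hN
      intro i hi
      exact Pi.single_eq_of_ne (by omega) 1
    · intro S
      have hz : φ (S - ∑ j ∈ Finset.range N, S j • (Pi.single j 1 : ℕ → K)) k = 0 := by
        apply hN
        intro i hi
        simp only [Pi.sub_apply, Finset.sum_apply, Pi.smul_apply, Pi.single_apply, smul_eq_mul,
          mul_ite, mul_one, mul_zero]
        rw [Finset.sum_ite_eq (Finset.range N) i S, if_pos (Finset.mem_range.mpr hi), sub_self]
      have h2 : φ S k - φ (∑ j ∈ Finset.range N, S j • (Pi.single j 1 : ℕ → K)) k = 0 := by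
        rw [← Pi.sub_apply (φ S), ← map_sub]
        exact hz
      rw [sub_eq_zero.mp h2, map_sum, Finset.sum_apply]
      refine Finset.sum_congr rfl fun j hj => ?_
      rw [map_smul, Pi.smul_apply, smul_eq_mul, mul_comm]
  set N : ℕ → ℕ := fun k => (hcont k).choose with hNdef
  have hN1 : ∀ k j, N k ≤ j → c k j = 0 := fun k => (hrep k).1
  have hN2 : ∀ k S, φ S k = ∑ j ∈ Finset.range (N k), c k j * S j := fun k => (hrep k).2
  choose D hD using coeffAux_support α β c fun n => ⟨N n, hN1 n⟩
  set Pn : ℕ → Polynomial K := fun n => ∑ j ∈ Finset.range (D n),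
    Polynomial.monomial j (coeffAux α β c n j) with hPn_def
  have hPcoeff : ∀ n j, (Pn n).coeff j = coeffAux α β c n j := by
    intro n j
    rw [hPn_def]
    simp only [Polynomial.finset_sum_coeff, Polynomial.coeff_monomial]
    rw [Finset.sum_ite_eq' (Finset.range (D n)) j (fun j' => coeffAux α β c n j')]
    by_cases hj : j ∈ Finset.range (D n)
    · rw [if_pos hj]
    · rw [if_neg hj, hD n j (le_of_not_gt fun h => hj (Finset.mem_range.mpr h))]
  refine ⟨Pn, fun S k => ?_⟩
  set Dbig := max (N k) ((Finset.range (k + 1)).sup fun n => k + D n) with hDbigdef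
  have hDbig1 : N k ≤ Dbig := le_max_left _ _
  have hDbig2 : ∀ n, n ≤ k → (k - n) + D n ≤ Dbig := by
    intro n hn
    have h1 : k + D n ≤ (Finset.range (k + 1)).sup fun n => k + D n :=
      Finset.le_sup (f := fun n => k + D n) (Finset.mem_range.mpr (by omega))
    have h2 := le_max_right (N k) ((Finset.range (k + 1)).sup fun n => k + D n)
    omega
  have hLHS : φ S k = ∑ j ∈ Finset.range Dbig, c k j * S j := by
    rw [hN2 k S]
    exact Finset.sum_subset (Finset.range_subset_range.mpr hDbig1) fun j _ hj => by
      rw [hN1 k j (le_of_not_gt fun h => hj (Finset.mem_range.mpr h)), zero_mul]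
  have hterm : ∀ n ∈ Finset.range (k + 1),
      (((raiseOp K fun m => β (m + 1)) ^ n) ((Polynomial.aeval (lowOp K α) (Pn n)) S)) k
        = ∑ j ∈ Finset.range Dbig,
            (if k - n ≤ j then
              Bprod β k n * Aprod α (k - n) (j - (k - n)) * coeffAux α β c n (j - (k - n))
            else 0) * S j := by
    intro n hn
    have hnk : n ≤ k := by have := Finset.mem_range.mp hn; omega
    rw [raiseOp_pow_apply, if_pos hnk]
    have hprod : (∏ i ∈ Finset.range n, β (k - 1 - i + 1)) = Bprod β k n := by
      refine Finset.prod_congr rfl fun i hi => ?_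
      have hik := Finset.mem_range.mp hi
      congr 1
      omega
    rw [hprod]
    rw [aeval_apply_eq_sum (lowOp K α) (Pn n) S (k - n) (D n)
      (fun i hi => by rw [hPcoeff, hD n i hi])]
    simp only [hPcoeff, lowOp_pow_apply]
    rw [Finset.mul_sum]
    set e : ℕ ↪ ℕ := ⟨fun i => (k - n) + i, fun a b h => Nat.add_left_cancel h⟩ with he_def
    set g : ℕ → K := fun j =>
      (if k - n ≤ j then
        Bprod β k n * Aprod α (k - n) (j - (k - n)) * coeffAux α β c n (j - (k - n))
      else 0) * S j with hg_def
    have hgj : ∀ j, g j = (if k - n ≤ j then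
        Bprod β k n * Aprod α (k - n) (j - (k - n)) * coeffAux α β c n (j - (k - n))
      else 0) * S j := fun _ => rfl
    have hej : ∀ i, e i = (k - n) + i := fun _ => rfl
    have hsub : (Finset.range (D n)).map e ⊆ Finset.range Dbig := by
      intro j hj
      obtain ⟨i, hi, rfl⟩ := Finset.mem_map.mp hj
      have h1 := Finset.mem_range.mp hi
      have h2 := hDbig2 n hnk
      rw [hej]
      exact Finset.mem_range.mpr (by omega)
    have hz : ∀ j ∈ Finset.range Dbig, j ∉ (Finset.range (D n)).map e → g j = 0 := by
      intro j _ hj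
      by_cases hle : k - n ≤ j
      · have hbig : D n ≤ j - (k - n) := by
          by_contra hlt
          exact hj (Finset.mem_map.mpr ⟨j - (k - n), Finset.mem_range.mpr (by omega),
            by rw [hej]; omega⟩)
        rw [hgj, if_pos hle, hD n _ hbig, mul_zero, zero_mul]
      · rw [hgj, if_neg hle, zero_mul]
    have step1 : ∑ j ∈ Finset.range Dbig, g j = ∑ j ∈ (Finset.range (D n)).map e, g j :=
      (Finset.sum_subset hsub hz).symm
    rw [step1, Finset.sum_map]
    refine Finset.sum_congr rfl fun i hi => ?_
    rw [hgj, hej, if_pos (Nat.le_add_right _ _), Nat.add_sub_cancel_left]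
    ring
  calc φ S k = ∑ j ∈ Finset.range Dbig, c k j * S j := hLHS
    _ = ∑ j ∈ Finset.range Dbig, (∑ n ∈ Finset.range (k + 1),
          (if k - n ≤ j then
            Bprod β k n * Aprod α (k - n) (j - (k - n)) * coeffAux α β c n (j - (k - n))
          else 0)) * S j := by
        refine Finset.sum_congr rfl fun j _ => ?_
        rw [coeffAux_spec α β c hα hβ k j]
    _ = ∑ n ∈ Finset.range (k + 1), ∑ j ∈ Finset.range Dbig,
          (if k - n ≤ j then
            Bprod β k n * Aprod α (k - n) (j - (k - n)) * coeffAux α β c n (j - (k - n))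
          else 0) * S j := by
        rw [← Finset.sum_comm]
        exact Finset.sum_congr rfl fun j _ => Finset.sum_mul _ _ _
    _ = ∑ n ∈ Finset.range (k + 1),
        (((raiseOp K fun m => β (m + 1)) ^ n)
          ((Polynomial.aeval (lowOp K α) (Pn n)) S)) k :=
        (Finset.sum_congr rfl hterm).symm
end

section
/- Let K be a field, α : ℕ → K a sequence of nonzero scalars, and β : ℕ → K a sequence of nonzero scalars with β_0 = 1. Let φ be a continuous linear endomorphism of V̂ (product topology over discrete K). Then there exists a sequence of polynomials (P_n)_{n∈ℕ} in K[x] such that φ is the sum of the summable family (R̂_α^n ∘ P_n(L̂_β))_{n∈ℕ}: explicitly, for every S ∈ V̂ and every k ∈ ℕ, (φ S)(k) = Σ_{n=0}^{k} ( R̂_α^n ( P_n(L̂_β)(S) ) )(k), where for a polynomial P, P(L̂_β) := Σ_j ⟨P,x^j⟩ L̂_β^j, and the terms with n > k vanish because (R̂_α^n T)(k) = 0 for n > k. -/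
namespace Stmt18Aux

variable {K : Type*} [Field K]

def Acoef (α : ℕ → K) (n d : ℕ) : K := ∏ i ∈ Finset.range n, α (d + i)

def Bcoef (β : ℕ → K) (j m : ℕ) : K := ∏ i ∈ Finset.range j, β (m + 1 + i)

lemma Acoef_ne_zero {α : ℕ → K} (hα : ∀ n, α n ≠ 0) (n d : ℕ) : Acoef α n d ≠ 0 :=
  Finset.prod_ne_zero_iff.mpr fun _ _ => hα _

lemma Bcoef_ne_zero {β : ℕ → K} (hβ : ∀ n, β n ≠ 0) (j m : ℕ) : Bcoef β j m ≠ 0 :=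
  Finset.prod_ne_zero_iff.mpr fun _ _ => hβ _

lemma raise_pow_apply (α : ℕ → K) (n : ℕ) :
    ∀ (k : ℕ) (T : ℕ → K), ((raiseOp K α ^ n) T) (k + n) = Acoef α n k * T k := by
  induction n with
  | zero => intro k T; simp [Acoef]
  | succ n ih =>
    intro k T
    rw [pow_succ, Module.End.mul_apply, show k + (n+1) = (k+1) + n from by omega, ih]
    have h1 : (raiseOp K α) T (k+1) = α k * T k := rfl
    have hA : Acoef α (n+1) k = Acoef α n (k+1) * α k := by
      unfold Acoef
      rw [Finset.prod_range_succ']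
      congr 1
      exact Finset.prod_congr rfl fun i _ => by congr 1; omega
    rw [h1, hA]; ring

lemma raise_pow_apply_lt (α : ℕ → K) (n : ℕ) :
    ∀ (k : ℕ), k < n → ∀ T : ℕ → K, ((raiseOp K α ^ n) T) k = 0 := by
  induction n with
  | zero => intro k hk; omega
  | succ n ih =>
    intro k hk T
    rw [pow_succ', Module.End.mul_apply]
    cases k with
    | zero => rfl
    | succ j =>
      have h1 : (raiseOp K α) ((raiseOp K α ^ n) T) (j+1) = α j * ((raiseOp K α ^ n) T) j := rfl
      rw [h1, ih j (by omega)]; ring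

lemma low_pow_apply (β : ℕ → K) (j : ℕ) :
    ∀ (m : ℕ) (S : ℕ → K),
      ((lowOp K (fun i => β (i+1)) ^ j) S) m = Bcoef β j m * S (m + j) := by
  induction j with
  | zero => intro m S; simp [Bcoef]
  | succ j ih =>
    intro m S
    rw [pow_succ', Module.End.mul_apply]
    have h1 : (lowOp K (fun i => β (i+1))) (((lowOp K (fun i => β (i+1))) ^ j) S) m
        = β (m+1) * (((lowOp K (fun i => β (i+1))) ^ j) S) (m+1) := rfl
    have hB : Bcoef β (j+1) m = β (m+1) * Bcoef β j (m+1) := by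
      unfold Bcoef
      rw [Finset.prod_range_succ', mul_comm]
      congr 1
      exact Finset.prod_congr rfl fun i _ => by congr 1; omega
    rw [h1, ih, hB, show m + 1 + j = m + (j+1) from by omega]; ring

def pc (c A B : ℕ → ℕ → K) : ℕ → ℕ → K
  | 0, m => c 0 m / (A 0 0 * B m 0)
  | (k+1), m =>
    (c (k+1) m - ∑ d ∈ Finset.range (k+1),
        (if d + 1 ≤ m then A (k-d) (d+1) * pc c A B (k-d) (m-(d+1)) * B (m-(d+1)) (d+1)
         else 0)) / (A (k+1) 0 * B m 0)
  decreasing_by omega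

lemma pc_spec (c A B : ℕ → ℕ → K) (k m : ℕ) (hA : A k 0 ≠ 0) (hB : B m 0 ≠ 0) :
    c k m = ∑ d ∈ Finset.range (k+1),
      (if d ≤ m then A (k-d) d * pc c A B (k-d) (m-d) * B (m-d) d else 0) := by
  rw [Finset.sum_range_succ']
  simp only [Nat.zero_le, if_pos, Nat.sub_zero, Nat.succ_sub_succ, Nat.add_sub_add_right]
  cases k with
  | zero =>
    simp only [Finset.range_zero, Finset.sum_empty, zero_add, Nat.sub_zero, pc]
    field_simp
  | succ k =>
    have hpc : pc c A B (k+1) m = (c (k+1) m - ∑ d ∈ Finset.range (k+1),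
        (if d + 1 ≤ m then A (k-d) (d+1) * pc c A B (k-d) (m-(d+1)) * B (m-(d+1)) (d+1)
         else 0)) / (A (k+1) 0 * B m 0) := by rw [pc]
    have key : ∀ (x y z w : K), x ≠ 0 → z ≠ 0 → x * ((w - y) / (x * z)) * z = w - y := by
      intros x y z w hx hz; field_simp
    have hss : ∀ d : ℕ, k + 1 - (d + 1) = k - d := fun d => by omega
    simp only [hss]
    rw [hpc, key _ _ _ _ hA hB]
    ring

end Stmt18Aux

open Stmt18Aux

/-- Every continuous linear endomorphism `φ` of `V̂ = ℕ → K` (product topology over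
discrete `K`) is the sum of a summable family `(R̂_α^n ∘ P_n(L̂_β))_n` for some
polynomials `P_n`; here `(L̂_β S)(n) = β_{n+1}·S(n+1)` and `(R̂_α S)(0) = 0`,
`(R̂_α S)(n+1) = α_n·S(n)`.  Explicitly, for every `S` and `k`,
`(φS)(k) = Σ_{n=0}^{k} (R̂_α^n(P_n(L̂_β)(S)))(k)`, the terms with `n > k` vanishing. -/
theorem stmt_18 (K : Type*) [Field K] (α β : ℕ → K)
    (hα : ∀ n, α n ≠ 0) (hβ : ∀ n, β n ≠ 0) (hβ0 : β 0 = 1)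
    (φ : (ℕ → K) →ₗ[K] (ℕ → K))
    (hφ : @Continuous (ℕ → K) (ℕ → K)
      (@Pi.topologicalSpace ℕ (fun _ => K) (fun _ => ⊥))
      (@Pi.topologicalSpace ℕ (fun _ => K) (fun _ => ⊥)) φ) :
    ∃ P : ℕ → Polynomial K, ∀ (S : ℕ → K) (k : ℕ),
      φ S k = ∑ n ∈ Finset.range (k + 1),
        (((raiseOp K α) ^ n)
          ((Polynomial.aeval (lowOp K fun m => β (m + 1)) (P n)) S)) k := by
  classical
  letI : TopologicalSpace K := ⊥
  haveI : DiscreteTopology K := ⟨rfl⟩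
  set L : (ℕ → K) →ₗ[K] (ℕ → K) := lowOp K fun m => β (m + 1) with hL
  -- Step 1: finite dependence of each coordinate of φ
  have key : ∀ k : ℕ, ∃ N : ℕ, ∀ S : ℕ → K, (∀ m, m < N → S m = 0) → φ S k = 0 := by
    intro k
    have hφc : Continuous (φ : (ℕ → K) → (ℕ → K)) := hφ
    have hcont : Continuous fun S : ℕ → K => φ S k := (continuous_apply k).comp hφc
    have h0 : (fun S : ℕ → K => φ S k) ⁻¹' {0} ∈ nhds (0 : ℕ → K) := by
      have := hcont.continuousAt (x := (0 : ℕ → K))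
      apply this.preimage_mem_nhds
      have : φ (0 : ℕ → K) k = 0 := by rw [map_zero]; rfl
      rw [this]
      exact IsOpen.mem_nhds (isOpen_discrete _) rfl
    rw [nhds_pi, Filter.mem_pi] at h0
    obtain ⟨I, hIfin, t, ht, hsub⟩ := h0
    refine ⟨hIfin.toFinset.sup id + 1, fun S hS => ?_⟩
    have hmem : S ∈ I.pi t := by
      intro i hi
      have hiN : i < hIfin.toFinset.sup id + 1 := by
        have := Finset.le_sup (f := id) (hIfin.mem_toFinset.mpr hi)
        simp only [id] at this
        omega
      rw [hS i hiN]
      have h0t : (0 : K) ∈ t i := mem_of_mem_nhds (ht i)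
      exact h0t
    exact hsub hmem
  choose N hN using key
  set c : ℕ → ℕ → K := fun k m => φ (Pi.single m 1) k with hc
  have hc0 : ∀ k m, N k ≤ m → c k m = 0 := by
    intro k m h
    exact hN k _ (fun m' hm' => Pi.single_eq_of_ne (by omega) 1)
  set p : ℕ → ℕ → K := pc c (Acoef α) (Bcoef β) with hp
  -- Step 2: finite support of the p's
  have hMex : ∀ n, ∃ M : ℕ, ∀ j, M ≤ j → p n j = 0 := by
    intro n
    induction n using Nat.strong_induction_on with
    | _ n ih =>
      cases n with
      | zero =>
        refine ⟨N 0, fun j hj => ?_⟩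
        have : p 0 j = c 0 j / (Acoef α 0 0 * Bcoef β j 0) := by rw [hp, pc]
        rw [this, hc0 0 j hj, zero_div]
      | succ n =>
        choose M hM using fun d : ℕ => ih (n - d) (by omega)
        refine ⟨max (N (n+1)) ((Finset.range (n+1)).sup (fun d => M d + d + 1)), fun j hj => ?_⟩
        have hj1 : N (n+1) ≤ j := le_trans (le_max_left _ _) hj
        have hj2 : ∀ d, d < n + 1 → M d + d + 1 ≤ j := by
          intro d hd
          have h1 : M d + d + 1 ≤ (Finset.range (n+1)).sup (fun d => M d + d + 1) :=
            Finset.le_sup (f := fun d => M d + d + 1) (Finset.mem_range.mpr hd)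
          omega
        have hpc : p (n+1) j = (c (n+1) j - ∑ d ∈ Finset.range (n+1),
            (if d + 1 ≤ j then Acoef α (n-d) (d+1) * p (n-d) (j-(d+1)) * Bcoef β (j-(d+1)) (d+1)
             else 0)) / (Acoef α (n+1) 0 * Bcoef β j 0) := by rw [hp, pc]
        rw [hpc, hc0 _ _ hj1]
        have hz : ∀ d ∈ Finset.range (n+1),
            (if d + 1 ≤ j then Acoef α (n-d) (d+1) * p (n-d) (j-(d+1)) * Bcoef β (j-(d+1)) (d+1)
             else 0) = 0 := by
          intro d hd
          have hd' := Finset.mem_range.mp hd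
          have : p (n-d) (j-(d+1)) = 0 := hM d _ (by have := hj2 d hd'; omega)
          rw [this]
          simp
        rw [Finset.sum_eq_zero hz]
        simp
  choose M hM using hMex
  -- the polynomials
  refine ⟨fun n => ∑ j ∈ Finset.range (M n), Polynomial.C (p n j) * Polynomial.X ^ j, ?_⟩
  intro S k
  have haeval : ∀ n (S : ℕ → K) (m : ℕ),
      (Polynomial.aeval L (∑ j ∈ Finset.range (M n), Polynomial.C (p n j) * Polynomial.X ^ j)) S m
        = ∑ j ∈ Finset.range (M n), p n j * (Bcoef β j m * S (m + j)) := by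
    intro n S m
    rw [map_sum, LinearMap.sum_apply, Finset.sum_apply]
    refine Finset.sum_congr rfl fun j _ => ?_
    simp only [map_mul, Polynomial.aeval_C, map_pow, Polynomial.aeval_X, Module.End.mul_apply,
      Module.algebraMap_end_apply, Pi.smul_apply, smul_eq_mul, hL]
    rw [low_pow_apply]
  -- coefficient identity
  have coeff_id : ∀ m, c k m = ∑ n ∈ Finset.range (k+1),
      (((raiseOp K α) ^ n)
        ((Polynomial.aeval L (∑ j ∈ Finset.range (M n), Polynomial.C (p n j) * Polynomial.X ^ j))
          (Pi.single m 1))) k := by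
    intro m
    rw [pc_spec c (Acoef α) (Bcoef β) k m (Acoef_ne_zero hα _ _) (Bcoef_ne_zero hβ _ _), ← hp]
    rw [← Finset.sum_range_reflect]
    refine Finset.sum_congr rfl fun d hd => ?_
    have hdk : d ≤ k := by
      have := Finset.mem_range.mp hd; omega
    have hred : k + 1 - 1 - d = k - d := by omega
    have hkk : k - (k - d) = d := by omega
    rw [hred, hkk]
    have hk : k = (k - d) + d := by omega
    conv_rhs => rw [hk]
    rw [raise_pow_apply, haeval]
    have hsingle : ∀ j : ℕ, ((Pi.single m 1 : ℕ → K)) (k - d + j) = if k - d + j = m then 1 else 0 := by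
      intro j; rw [Pi.single_apply]
    by_cases hdm : k - d ≤ m
    · have hcond : ∀ j : ℕ, (k - d + j = m) = (j = m - (k - d)) := fun j => propext (by omega)
      have heq : ∑ j ∈ Finset.range (M d), p d j * (Bcoef β j (k - d) * ((Pi.single m 1 : ℕ → K)) (k - d + j))
          = ∑ j ∈ Finset.range (M d), (if j = m - (k - d) then p d j * Bcoef β j (k - d) else 0) := by
        refine Finset.sum_congr rfl fun j _ => ?_
        simp only [hsingle, hcond]
        split_ifs <;> ring
      rw [heq, Finset.sum_ite_eq' (Finset.range (M d)) (m - (k - d)) (fun j => p d j * Bcoef β j (k - d))]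
      rw [if_pos hdm]
      split_ifs with h2
      · ring
      · have hz : p d (m - (k - d)) = 0 := hM _ _ (by simp [Finset.mem_range] at h2; omega)
        rw [hz]; ring
    · rw [if_neg hdm]
      have heq : ∑ j ∈ Finset.range (M d), p d j * (Bcoef β j (k - d) * ((Pi.single m 1 : ℕ → K)) (k - d + j)) = 0 := by
        refine Finset.sum_eq_zero fun j _ => ?_
        rw [hsingle j, if_neg (by omega)]
        ring
      rw [heq, mul_zero]
  -- assembling
  set T : ℕ := max (N k) (k + 1 + (Finset.range (k+1)).sup M) with hT
  have hNT : N k ≤ T := le_max_left _ _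
  have hjT : ∀ n, n ∈ Finset.range (k+1) → ∀ j, j < M n → k - n + j < T := by
    intro n hn j hj
    have : M n ≤ (Finset.range (k+1)).sup M := Finset.le_sup hn
    have := le_max_right (N k) (k + 1 + (Finset.range (k+1)).sup M)
    omega
  set S' : ℕ → K := fun m => if m < T then S m else 0 with hS'
  have hS'sum : S' = ∑ m ∈ Finset.range T, S m • (Pi.single m 1 : ℕ → K) := by
    funext x
    rw [Finset.sum_apply]
    simp only [Pi.smul_apply, Pi.single_apply, smul_eq_mul, mul_ite, mul_one, mul_zero]
    rw [Finset.sum_ite_eq (Finset.range T) x S]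
    simp [hS', Finset.mem_range]
  have step1 : φ S k = φ S' k := by
    have hz : φ (S - S') k = 0 := by
      refine hN k _ fun m hm => ?_
      have hmT : m < T := lt_of_lt_of_le hm hNT
      simp [hS', Pi.sub_apply, hmT]
    have := map_sub φ S S'
    have h2 : φ S k - φ S' k = 0 := by
      rw [← Pi.sub_apply (φ S) (φ S') k, ← this]; exact hz
    exact sub_eq_zero.mp h2
  have step2 : φ S' k = ∑ m ∈ Finset.range T, S m * c k m := by
    rw [hS'sum, map_sum, Finset.sum_apply]
    refine Finset.sum_congr rfl fun m _ => ?_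
    rw [map_smul, Pi.smul_apply, smul_eq_mul]
  have step3 : ∀ n, n ∈ Finset.range (k+1) →
      (((raiseOp K α) ^ n)
        ((Polynomial.aeval L (∑ j ∈ Finset.range (M n), Polynomial.C (p n j) * Polynomial.X ^ j)) S)) k
      = (((raiseOp K α) ^ n)
        ((Polynomial.aeval L (∑ j ∈ Finset.range (M n), Polynomial.C (p n j) * Polynomial.X ^ j)) S')) k := by
    intro n hn
    have hnk : n ≤ k := by have := Finset.mem_range.mp hn; omega
    have hk2 : k = (k - n) + n := by omega
    conv_lhs => rw [hk2]
    conv_rhs => rw [hk2]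
    rw [raise_pow_apply, raise_pow_apply, haeval, haeval]
    congr 1
    refine Finset.sum_congr rfl fun j hj => ?_
    have hlt : k - n + j < T := hjT n hn j (Finset.mem_range.mp hj)
    have hSS : S' (k - n + j) = S (k - n + j) := by simp [hS', hlt]
    rw [hSS]
  have step4 : ∀ n : ℕ,
      (((raiseOp K α) ^ n)
        ((Polynomial.aeval L (∑ j ∈ Finset.range (M n), Polynomial.C (p n j) * Polynomial.X ^ j)) S')) k
      = ∑ m ∈ Finset.range T, S m *
          (((raiseOp K α) ^ n)
            ((Polynomial.aeval L (∑ j ∈ Finset.range (M n), Polynomial.C (p n j) * Polynomial.X ^ j))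
              (Pi.single m 1))) k := by
    intro n
    rw [hS'sum, map_sum, map_sum, Finset.sum_apply]
    refine Finset.sum_congr rfl fun m _ => ?_
    rw [map_smul, map_smul, Pi.smul_apply, smul_eq_mul]
  calc φ S k = φ S' k := step1
    _ = ∑ m ∈ Finset.range T, S m * c k m := step2
    _ = ∑ m ∈ Finset.range T, ∑ n ∈ Finset.range (k+1), S m *
          (((raiseOp K α) ^ n)
            ((Polynomial.aeval L (∑ j ∈ Finset.range (M n), Polynomial.C (p n j) * Polynomial.X ^ j))
              (Pi.single m 1))) k := by
        refine Finset.sum_congr rfl fun m _ => ?_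
        rw [coeff_id m, Finset.mul_sum]
    _ = ∑ n ∈ Finset.range (k+1), ∑ m ∈ Finset.range T, S m *
          (((raiseOp K α) ^ n)
            ((Polynomial.aeval L (∑ j ∈ Finset.range (M n), Polynomial.C (p n j) * Polynomial.X ^ j))
              (Pi.single m 1))) k := Finset.sum_comm
    _ = ∑ n ∈ Finset.range (k+1),
          (((raiseOp K α) ^ n)
            ((Polynomial.aeval L (∑ j ∈ Finset.range (M n), Polynomial.C (p n j) * Polynomial.X ^ j)) S')) k := by
        refine Finset.sum_congr rfl fun n _ => (step4 n).symm
    _ = ∑ n ∈ Finset.range (k+1),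
          (((raiseOp K α) ^ n)
            ((Polynomial.aeval L (∑ j ∈ Finset.range (M n), Polynomial.C (p n j) * Polynomial.X ^ j)) S)) k := by
        refine Finset.sum_congr rfl fun n hn => (step3 n hn).symm
end
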